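/- arXiv:2203.03761 — 8 statements merged into one kernel-verified Lean document; each statement's English description precedes it below -/
import Mathlib

section
/- Let S be the sparse random projection matrix built from d, w, t with m = t·w. Then for any fixed vectors g₁, g₂ ∈ ℝ^d, the second moment of the projected inner product satisfies E[⟨S g₁, S g₂⟩²] ≤ ⟨g₁, g₂⟩² + (2/m)·‖g₁‖₂²·‖g₂‖₂². -/
set_option linter.unusedSectionVars false
set_option maxHeartbeats 1000000


open MeasureTheory Finset

/-- The sparse random projection matrix built from hash functions `h` and sign
functions `sg`: the vertical stacking of `t` count-sketch matrices, scaled by `1/√t`.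
Rows are indexed by `Fin t × Fin w` (so `m = t·w` rows). -/
noncomputable def sketchMatrix (d w t : ℕ)
    (h : Fin t → Fin d → Fin w) (sg : Fin t → Fin d → Bool) :
    Matrix (Fin t × Fin w) (Fin d) ℝ :=
  Matrix.of fun p j =>
    (Real.sqrt t)⁻¹ * (if sg p.1 j then 1 else -1) * (if h p.1 j = p.2 then 1 else 0)

/-- The (finite, uniform) sample space for the sparse random projection:
independent uniform hash functions and independent uniform signs. -/
abbrev SketchΩ (d w t : ℕ) : Type :=
  (Fin t → Fin d → Fin w) × (Fin t → Fin d → Bool)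

/-- Expectation of a real-valued function under the uniform distribution on `SketchΩ`. -/
noncomputable def sketchE (d w t : ℕ) (f : SketchΩ d w t → ℝ) : ℝ :=
  (∑ ω : SketchΩ d w t, f ω) / (Fintype.card (SketchΩ d w t) : ℝ)



section helpers
variable {A B : Type*} [Fintype A] [DecidableEq A] [Fintype B]

lemma sum_fn_factor (g : A → B → ℝ) :
    ∑ f : A → B, ∏ a, g a (f a) = ∏ a, ∑ b, g a b := by
  rw [Finset.prod_univ_sum (fun _ => (univ : Finset B)) g, Fintype.piFinset_univ]

lemma sum_fn_one (a : A) (F : B → ℝ) :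
    (∑ f : A → B, F (f a)) * (Fintype.card B : ℝ)
      = (Fintype.card B : ℝ) ^ (Fintype.card A) * ∑ b, F b := by
  have h2 : ∑ f : A → B, F (f a) = ∑ f : A → B, ∏ x, (if x = a then F (f x) else 1) :=
    Finset.sum_congr rfl fun f _ => by
      rw [Finset.prod_ite_eq' univ a (fun x => F (f x))]; simp
  rw [h2, sum_fn_factor (fun x b => if x = a then F b else (1:ℝ)),
    ← Finset.mul_prod_erase univ _ (Finset.mem_univ a)]
  have h4 : ∏ x ∈ univ.erase a, (∑ b, if x = a then F b else (1:ℝ))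
      = (Fintype.card B : ℝ) ^ (Fintype.card A - 1) := by
    have hp : ∀ x ∈ univ.erase a, (∑ b, if x = a then F b else (1:ℝ)) = (Fintype.card B : ℝ) := by
      intro x hx
      simp [(Finset.mem_erase.mp hx).1]
    rw [Finset.prod_congr rfl hp, Finset.prod_const,
      Finset.card_erase_of_mem (mem_univ a), Finset.card_univ]
  rw [h4]
  have hA : 1 ≤ Fintype.card A := Fintype.card_pos_iff.mpr ⟨a⟩
  have key : (Fintype.card B : ℝ) ^ (Fintype.card A - 1) * (Fintype.card B : ℝ)
      = (Fintype.card B : ℝ) ^ (Fintype.card A) := by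
    rw [← pow_succ, Nat.sub_add_cancel hA]
  simp only [if_pos rfl, eq_self_iff_true, if_true]
  calc (∑ b, F b) * (Fintype.card B : ℝ) ^ (Fintype.card A - 1) * (Fintype.card B : ℝ)
      = (∑ b, F b) * ((Fintype.card B : ℝ) ^ (Fintype.card A - 1) * (Fintype.card B : ℝ)) := by ring
    _ = _ := by rw [key]; ring

lemma sum_fn_two {a a' : A} (h : a ≠ a') (F G : B → ℝ) :
    (∑ f : A → B, F (f a) * G (f a')) * (Fintype.card B : ℝ) ^ 2
      = (Fintype.card B : ℝ) ^ (Fintype.card A) * ((∑ b, F b) * (∑ b, G b)) := by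
  have h2 : ∑ f : A → B, F (f a) * G (f a')
      = ∑ f : A → B, ∏ x, (if x = a then F (f x) else if x = a' then G (f x) else 1) := by
    refine Finset.sum_congr rfl fun f _ => ?_
    rw [← Finset.mul_prod_erase univ _ (Finset.mem_univ a),
      ← Finset.mul_prod_erase _ _ (Finset.mem_erase.mpr ⟨Ne.symm h, mem_univ a'⟩)]
    have hp : ∀ x ∈ (univ.erase a).erase a',
        (if x = a then F (f x) else if x = a' then G (f x) else 1) = 1 := by
      intro x hx
      obtain ⟨hxa', hxa⟩ := Finset.mem_erase.mp hx
      simp [hxa', (Finset.mem_erase.mp hxa).1]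
    rw [Finset.prod_congr rfl hp, Finset.prod_const_one, if_pos rfl, if_neg (Ne.symm h), if_pos rfl]
    ring
  rw [h2, sum_fn_factor (fun x b => if x = a then F b else if x = a' then G b else (1:ℝ)),
    ← Finset.mul_prod_erase univ _ (Finset.mem_univ a),
    ← Finset.mul_prod_erase _ _ (Finset.mem_erase.mpr ⟨Ne.symm h, mem_univ a'⟩)]
  have h4 : ∏ x ∈ (univ.erase a).erase a',
      (∑ b, if x = a then F b else if x = a' then G b else (1:ℝ))
      = (Fintype.card B : ℝ) ^ (Fintype.card A - 1 - 1) := by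
    have hp : ∀ x ∈ (univ.erase a).erase a',
        (∑ b, if x = a then F b else if x = a' then G b else (1:ℝ)) = (Fintype.card B : ℝ) := by
      intro x hx
      obtain ⟨hxa', hxa⟩ := Finset.mem_erase.mp hx
      simp [hxa', (Finset.mem_erase.mp hxa).1]
    rw [Finset.prod_congr rfl hp, Finset.prod_const,
      Finset.card_erase_of_mem (Finset.mem_erase.mpr ⟨Ne.symm h, mem_univ a'⟩),
      Finset.card_erase_of_mem (mem_univ a), Finset.card_univ]
  rw [h4]
  have hA : 2 ≤ Fintype.card A := Fintype.one_lt_card_iff.mpr ⟨a, a', h⟩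
  have key : (Fintype.card B : ℝ) ^ (Fintype.card A - 1 - 1) * (Fintype.card B : ℝ) ^ 2
      = (Fintype.card B : ℝ) ^ (Fintype.card A) := by
    rw [← pow_add]
    congr 1
    omega
  simp only [if_pos rfl, if_neg (Ne.symm h), eq_self_iff_true, if_true]
  calc (∑ b, F b) * ((∑ b, G b) * (Fintype.card B : ℝ) ^ (Fintype.card A - 1 - 1))
        * (Fintype.card B : ℝ) ^ 2
      = (∑ b, F b) * (∑ b, G b)
        * ((Fintype.card B : ℝ) ^ (Fintype.card A - 1 - 1) * (Fintype.card B : ℝ) ^ 2) := by ring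
    _ = _ := by rw [key]; ring

end helpers

noncomputable def eps (b : Bool) : ℝ := if b then 1 else -1

lemma eps_not (b : Bool) : eps (!b) = - eps b := by cases b <;> simp [eps]
lemma eps_sq (b : Bool) : eps b * eps b = 1 := by cases b <;> simp [eps]

section flip
variable {J : Type*} [Fintype J] [DecidableEq J]

lemma sum_flip_zero (a : J) (Φ : (J → Bool) → ℝ)
    (h : ∀ f, Φ (Function.update f a (!(f a))) = - Φ f) :
    ∑ f : J → Bool, Φ f = 0 := by
  have hinv : Function.Involutive (fun f : J → Bool => Function.update f a (!(f a))) := by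
    intro f
    simp [Function.update_idem]
  have hb : ∑ f : J → Bool, Φ f
      = ∑ f : J → Bool, Φ (Function.update f a (!(f a))) :=
    (Fintype.sum_bijective _ hinv.bijective _ _ (fun f => rfl)).symm
  have : ∑ f : J → Bool, Φ f = - ∑ f : J → Bool, Φ f := by
    conv_lhs => rw [hb]
    simp only [h]
    exact Finset.sum_neg_distrib (f := Φ)
  linarith

-- average of eps(βa) eps(βb)
lemma sum_eps_two (a b : J) :
    ∑ f : J → Bool, eps (f a) * eps (f b)
      = if a = b then (2:ℝ) ^ (Fintype.card J) else 0 := by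
  by_cases hab : a = b
  · subst hab
    simp only [if_pos rfl]
    have : ∀ f : J → Bool, eps (f a) * eps (f a) = 1 := fun f => eps_sq _
    rw [Finset.sum_congr rfl (fun f _ => this f), Finset.sum_const, Finset.card_univ]
    simp [Fintype.card_fun]
  · rw [if_neg hab]
    apply sum_flip_zero a
    intro f
    rw [Function.update_self, Function.update_of_ne (Ne.symm hab), eps_not]
    ring

end flip

section four
variable {J : Type*} [Fintype J] [DecidableEq J]

lemma flip_once {a b c k : J} (ha : a ≠ k) (hb : b ≠ k) (hc : c ≠ k) :
    ∑ f : J → Bool, eps (f a) * eps (f b) * eps (f c) * eps (f k) = 0 := by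
  apply sum_flip_zero k
  intro f
  rw [Function.update_self, Function.update_of_ne ha, Function.update_of_ne hb,
    Function.update_of_ne hc, eps_not]
  ring

lemma sum_card_one {Φ : (J → Bool) → ℝ} (h : ∀ f, Φ f = 1) :
    ∑ f : J → Bool, Φ f = (2:ℝ) ^ (Fintype.card J) := by
  rw [Finset.sum_congr rfl (fun f _ => h f), Finset.sum_const, Finset.card_univ]
  simp [Fintype.card_fun]

lemma sum_eps_four (a b c e : J) :
    ∑ f : J → Bool, eps (f a) * eps (f b) * eps (f c) * eps (f e)
      = if (a = b ∧ c = e) ∨ (a = c ∧ b = e) ∨ (a = e ∧ b = c)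
        then (2:ℝ) ^ (Fintype.card J) else 0 := by
  by_cases hab : a = b
  · by_cases hce : c = e
    · rw [if_pos (Or.inl ⟨hab, hce⟩)]
      subst hab; subst hce
      exact sum_card_one fun f => by
        linear_combination eps (f c) * eps (f c) * eps_sq (f a) + eps_sq (f c)
    · have hcond : ¬((a = b ∧ c = e) ∨ (a = c ∧ b = e) ∨ (a = e ∧ b = c)) := by
        rintro (⟨_, h⟩ | ⟨h1, h2⟩ | ⟨h1, h2⟩)
        · exact hce h
        · exact hce (by rw [← h1, hab, h2])
        · exact hce (by rw [← h2, ← hab, h1])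
      rw [if_neg hcond]
      by_cases hca : c = a
      · -- a = b = c ≠ e : flip at e
        have hea : e ≠ a := fun he => hce (by rw [hca, he])
        have hae : a ≠ e := Ne.symm hea
        have hbe : b ≠ e := fun h => hea (h ▸ hab).symm
        exact flip_once hae hbe hce
      · -- a = b, c ∉ {a, b, e} : flip at c
        have hcb : c ≠ b := fun h => hca (h.trans hab.symm)
        have this1 : ∑ f : J → Bool, eps (f a) * eps (f b) * eps (f c) * eps (f e)
            = ∑ f : J → Bool, eps (f a) * eps (f b) * eps (f e) * eps (f c) :=
          Finset.sum_congr rfl fun f _ => by ring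
        rw [this1]
        exact flip_once (Ne.symm hca) (Ne.symm hcb) (Ne.symm hce)
  · by_cases hce : c = e
    · have hcond : ¬((a = b ∧ c = e) ∨ (a = c ∧ b = e) ∨ (a = e ∧ b = c)) := by
        rintro (⟨h, _⟩ | ⟨h1, h2⟩ | ⟨h1, h2⟩)
        · exact hab h
        · exact hab (by rw [h1, hce, ← h2])
        · exact hab (by rw [h1, ← hce, ← h2])
      rw [if_neg hcond]
      by_cases hac : a = c
      · -- a = c = e ≠ b : flip at b
        have hcb : c ≠ b := fun h => hab (hac.trans h)
        have heb : e ≠ b := fun h => hcb (hce.trans h)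
        have this1 : ∑ f : J → Bool, eps (f a) * eps (f b) * eps (f c) * eps (f e)
            = ∑ f : J → Bool, eps (f a) * eps (f c) * eps (f e) * eps (f b) :=
          Finset.sum_congr rfl fun f _ => by ring
        rw [this1]
        exact flip_once hab hcb heb
      · -- c = e, a ∉ {b,c,e} : flip at a
        have hae : a ≠ e := fun h => hac (h.trans hce.symm)
        have this1 : ∑ f : J → Bool, eps (f a) * eps (f b) * eps (f c) * eps (f e)
            = ∑ f : J → Bool, eps (f b) * eps (f c) * eps (f e) * eps (f a) :=
          Finset.sum_congr rfl fun f _ => by ring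
        rw [this1]
        exact flip_once (Ne.symm hab) (Ne.symm hac) (Ne.symm hae)
    · by_cases h1 : a = c ∧ b = e
      · rw [if_pos (Or.inr (Or.inl h1))]
        obtain ⟨h1a, h1b⟩ := h1
        subst h1a; subst h1b
        exact sum_card_one fun f => by
          linear_combination eps (f b) * eps (f b) * eps_sq (f a) + eps_sq (f b)
      · by_cases h2 : a = e ∧ b = c
        · rw [if_pos (Or.inr (Or.inr h2))]
          obtain ⟨h2a, h2b⟩ := h2
          subst h2a; subst h2b
          exact sum_card_one fun f => by
            linear_combination eps (f b) * eps (f b) * eps_sq (f a) + eps_sq (f b)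
        · have hcond : ¬((a = b ∧ c = e) ∨ (a = c ∧ b = e) ∨ (a = e ∧ b = c)) := by
            rintro (⟨h, _⟩ | h | h)
            · exact hab h
            · exact h1 h
            · exact h2 h
          rw [if_neg hcond]
          by_cases hac : a = c
          · -- a = c, b ∉ {a,c,e} : flip at b
            have hbe : b ≠ e := fun h => h1 ⟨hac, h⟩
            have hcb : c ≠ b := fun h => hab (hac.trans h)
            have this1 : ∑ f : J → Bool, eps (f a) * eps (f b) * eps (f c) * eps (f e)
                = ∑ f : J → Bool, eps (f a) * eps (f c) * eps (f e) * eps (f b) :=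
              Finset.sum_congr rfl fun f _ => by ring
            rw [this1]
            exact flip_once hab hcb (Ne.symm hbe)
          · by_cases hae : a = e
            · -- a = e, b ∉ {a,c,e} : flip at b
              have hbc : b ≠ c := fun h => h2 ⟨hae, h⟩
              have heb : e ≠ b := fun h => hab (hae.trans h)
              have this1 : ∑ f : J → Bool, eps (f a) * eps (f b) * eps (f c) * eps (f e)
                  = ∑ f : J → Bool, eps (f a) * eps (f c) * eps (f e) * eps (f b) :=
                Finset.sum_congr rfl fun f _ => by ring
              rw [this1]
              exact flip_once hab (Ne.symm hbc) heb
            · -- a ∉ {b,c,e} : flip at a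
              have this1 : ∑ f : J → Bool, eps (f a) * eps (f b) * eps (f c) * eps (f e)
                  = ∑ f : J → Bool, eps (f b) * eps (f c) * eps (f e) * eps (f a) :=
                Finset.sum_congr rfl fun f _ => by ring
              rw [this1]
              exact flip_once (Ne.symm hab) (Ne.symm hac) (Ne.symm hae)

end four

section hash
variable {J W : Type*} [Fintype J] [DecidableEq J] [Fintype W] [DecidableEq W]

lemma sum_delta_diag (a : J) :
    ∑ f : J → W, (if f a = f a then (1:ℝ) else 0)
      = (Fintype.card W : ℝ) ^ (Fintype.card J) := by
  simp [Finset.sum_const, Finset.card_univ, Fintype.card_fun]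

lemma sum_delta_two {a b : J} (hab : a ≠ b) :
    (∑ f : J → W, if f a = f b then (1:ℝ) else 0) * (Fintype.card W : ℝ) ^ 2
      = (Fintype.card W : ℝ) ^ (Fintype.card J) * (Fintype.card W : ℝ) := by
  have hsplit : ∀ f : J → W, (if f a = f b then (1:ℝ) else 0)
      = ∑ k, (if f a = k then (1:ℝ) else 0) * (if f b = k then 1 else 0) := by
    intro f
    by_cases h : f a = f b
    · rw [if_pos h]
      have hterm : ∀ k, (if f a = k then (1:ℝ) else 0) * (if f b = k then 1 else 0)
          = (if f a = k then (1:ℝ) else 0) := by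
        intro k
        by_cases hk : f a = k
        · simp [hk, h.symm.trans hk]
        · simp [hk]
      rw [Finset.sum_congr rfl (fun k _ => hterm k), Finset.sum_ite_eq univ (f a) (fun _ => (1:ℝ))]
      simp
    · rw [if_neg h]
      symm
      refine Finset.sum_eq_zero fun k _ => ?_
      by_cases hk : f a = k
      · have : ¬ f b = k := fun hbk => h (hk.trans hbk.symm)
        simp [hk, this]
      · simp [hk]
  rw [Finset.sum_congr rfl (fun f _ => hsplit f), Finset.sum_comm, Finset.sum_mul]
  have hterm : ∀ k : W, (∑ f : J → W, (if f a = k then (1:ℝ) else 0) * (if f b = k then 1 else 0))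
      * (Fintype.card W : ℝ) ^ 2 = (Fintype.card W : ℝ) ^ (Fintype.card J) := by
    intro k
    have := sum_fn_two hab (fun y => if y = k then (1:ℝ) else 0) (fun y => if y = k then (1:ℝ) else 0)
    simpa [Finset.sum_ite_eq' univ k (fun _ => (1:ℝ))] using this
  rw [Finset.sum_congr rfl (fun k _ => hterm k), Finset.sum_const, Finset.card_univ]
  ring

end hash

section master
variable {d w : ℕ}

lemma ite_sq (P : Prop) [Decidable P] :
    (if P then (1:ℝ) else 0) * (if P then (1:ℝ) else 0) = if P then (1:ℝ) else 0 := by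
  by_cases h : P <;> simp [h]

lemma master (hw : 0 < w) (j1 j2 j3 j4 : Fin d) :
    ∑ η : Fin d → Fin w, ∑ β : Fin d → Bool,
      (eps (β j1) * eps (β j2) * eps (β j3) * eps (β j4)) *
        ((if η j1 = η j2 then (1:ℝ) else 0) * (if η j3 = η j4 then 1 else 0))
    = (2:ℝ) ^ d * (if j1 = j2 ∧ j3 = j4 then (w:ℝ) ^ d
        else if (j1 = j3 ∧ j2 = j4) ∨ (j1 = j4 ∧ j2 = j3) then (w:ℝ) ^ d / w else 0) := by
  have hwR : (0:ℝ) < w := by exact_mod_cast hw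
  have hfac : ∑ η : Fin d → Fin w, ∑ β : Fin d → Bool,
      (eps (β j1) * eps (β j2) * eps (β j3) * eps (β j4)) *
        ((if η j1 = η j2 then (1:ℝ) else 0) * (if η j3 = η j4 then 1 else 0))
      = (∑ β : Fin d → Bool, eps (β j1) * eps (β j2) * eps (β j3) * eps (β j4)) *
        (∑ η : Fin d → Fin w, (if η j1 = η j2 then (1:ℝ) else 0) * (if η j3 = η j4 then 1 else 0)) := by
    rw [Finset.sum_mul_sum]
    rw [Finset.sum_comm]
  rw [hfac, sum_eps_four]
  by_cases hC : (j1 = j2 ∧ j3 = j4) ∨ (j1 = j3 ∧ j2 = j4) ∨ (j1 = j4 ∧ j2 = j3)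
  · rw [if_pos hC]
    by_cases h1 : j1 = j2 ∧ j3 = j4
    · rw [if_pos h1]
      obtain ⟨h12, h34⟩ := h1
      have hδ : ∑ η : Fin d → Fin w, (if η j1 = η j2 then (1:ℝ) else 0) * (if η j3 = η j4 then 1 else 0)
          = (w:ℝ) ^ d := by
        have : ∀ η : Fin d → Fin w,
            (if η j1 = η j2 then (1:ℝ) else 0) * (if η j3 = η j4 then 1 else 0) = 1 := by
          intro η
          rw [if_pos (by rw [h12]), if_pos (by rw [h34])]; ring
        rw [Finset.sum_congr rfl fun η _ => this η, Finset.sum_const, Finset.card_univ]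
        simp [Fintype.card_fun]
      rw [hδ]
      simp [Fintype.card_fun]
    · rw [if_neg h1]
      rcases hC.resolve_left h1 with ⟨h13, h24⟩ | ⟨h14, h23⟩
      · subst h13; subst h24
        have h12 : j1 ≠ j2 := fun h12 => h1 ⟨h12, h12⟩
        have hδ : ∑ η : Fin d → Fin w, (if η j1 = η j2 then (1:ℝ) else 0) * (if η j1 = η j2 then (1:ℝ) else 0)
            = (w:ℝ) ^ d / w := by
          have h2 := sum_delta_two (W := Fin w) h12
          simp only [Fintype.card_fin] at h2
          rw [Finset.sum_congr rfl fun η _ => ite_sq _]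
          field_simp at h2 ⊢
          nlinarith [h2]
        rw [hδ]
        simp
      · subst h14; subst h23
        have h12 : j1 ≠ j2 := fun h12 => h1 ⟨h12, by rw [h12]⟩
        have hδ : ∑ η : Fin d → Fin w, (if η j1 = η j2 then (1:ℝ) else 0) * (if η j2 = η j1 then (1:ℝ) else 0)
            = (w:ℝ) ^ d / w := by
          have hcomm : ∀ η : Fin d → Fin w,
              (if η j1 = η j2 then (1:ℝ) else 0) * (if η j2 = η j1 then (1:ℝ) else 0)
              = if η j1 = η j2 then (1:ℝ) else 0 := by
            intro η
            by_cases h : η j1 = η j2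
            · simp [h]
            · simp [h, fun hh => h (Eq.symm hh)]
          have h2 := sum_delta_two (W := Fin w) h12
          simp only [Fintype.card_fin] at h2
          rw [Finset.sum_congr rfl fun η _ => hcomm η]
          field_simp at h2 ⊢
          nlinarith [h2]
        rw [hδ]
        simp [if_pos]
  · rw [if_neg hC, if_neg (fun h => hC (Or.inl h)), if_neg (fun h => hC (Or.inr h))]
    simp

end master

section ymom
variable {d w : ℕ} (g₁ g₂ : Fin d → ℝ)

noncomputable def Yf (d w : ℕ) (g₁ g₂ : Fin d → ℝ)
    (x : (Fin d → Fin w) × (Fin d → Bool)) : ℝ :=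
  ∑ p : Fin d × Fin d,
    (eps (x.2 p.1) * eps (x.2 p.2)) *
      ((if x.1 p.1 = x.1 p.2 then (1:ℝ) else 0) * (g₁ p.1 * g₂ p.2))

lemma key_one (hw : 0 < w) (p : Fin d × Fin d) :
    (∑ η : Fin d → Fin w, ∑ β : Fin d → Bool,
      (eps (β p.1) * eps (β p.2)) * ((if η p.1 = η p.2 then (1:ℝ) else 0) * (g₁ p.1 * g₂ p.2)))
    = if p.1 = p.2 then ((w:ℝ) ^ d * (2:ℝ) ^ d) * (g₁ p.1 * g₂ p.2) else 0 := by
  have hfac : (∑ η : Fin d → Fin w, ∑ β : Fin d → Bool,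
      (eps (β p.1) * eps (β p.2)) * ((if η p.1 = η p.2 then (1:ℝ) else 0) * (g₁ p.1 * g₂ p.2)))
      = (∑ β : Fin d → Bool, eps (β p.1) * eps (β p.2)) *
        ((∑ η : Fin d → Fin w, if η p.1 = η p.2 then (1:ℝ) else 0) * (g₁ p.1 * g₂ p.2)) := by
    calc ∑ η : Fin d → Fin w, ∑ β : Fin d → Bool,
        (eps (β p.1) * eps (β p.2)) * ((if η p.1 = η p.2 then (1:ℝ) else 0) * (g₁ p.1 * g₂ p.2))
        = ∑ η : Fin d → Fin w, (∑ β : Fin d → Bool, eps (β p.1) * eps (β p.2)) *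
            ((if η p.1 = η p.2 then (1:ℝ) else 0) * (g₁ p.1 * g₂ p.2)) :=
          Finset.sum_congr rfl fun η _ => by rw [← Finset.sum_mul]
      _ = (∑ β : Fin d → Bool, eps (β p.1) * eps (β p.2)) *
            ∑ η : Fin d → Fin w, ((if η p.1 = η p.2 then (1:ℝ) else 0) * (g₁ p.1 * g₂ p.2)) := by
          rw [← Finset.mul_sum]
      _ = _ := by rw [← Finset.sum_mul]
  rw [hfac, sum_eps_two]
  by_cases hp : p.1 = p.2
  · rw [if_pos hp, if_pos hp]
    have hδ : (∑ η : Fin d → Fin w, if η p.1 = η p.2 then (1:ℝ) else 0) = (w:ℝ) ^ d := by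
      rw [hp]
      have := sum_delta_diag (W := Fin w) p.2
      simpa using this
    rw [hδ]
    simp only [Fintype.card_fin]
    ring
  · rw [if_neg hp, if_neg hp, zero_mul]

lemma sum_Y (hw : 0 < w) :
    ∑ x : (Fin d → Fin w) × (Fin d → Bool), Yf d w g₁ g₂ x
      = ((w:ℝ) ^ d * (2:ℝ) ^ d) * ∑ j, g₁ j * g₂ j := by
  rw [Fintype.sum_prod_type]
  simp only [Yf]
  have h1 : ∀ η : Fin d → Fin w,
      ∑ β : Fin d → Bool, ∑ p : Fin d × Fin d,
        (eps (β p.1) * eps (β p.2)) * ((if η p.1 = η p.2 then (1:ℝ) else 0) * (g₁ p.1 * g₂ p.2))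
      = ∑ p : Fin d × Fin d, ∑ β : Fin d → Bool,
        (eps (β p.1) * eps (β p.2)) * ((if η p.1 = η p.2 then (1:ℝ) else 0) * (g₁ p.1 * g₂ p.2)) :=
    fun η => Finset.sum_comm
  rw [Finset.sum_congr rfl fun η _ => h1 η, Finset.sum_comm]
  rw [Finset.sum_congr rfl fun p _ => key_one g₁ g₂ hw p]
  rw [Fintype.sum_prod_type]
  have h2 : ∀ j1 : Fin d,
      (∑ j2 : Fin d, if j1 = j2 then ((w:ℝ) ^ d * (2:ℝ) ^ d) * (g₁ j1 * g₂ j2) else 0)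
      = ((w:ℝ) ^ d * (2:ℝ) ^ d) * (g₁ j1 * g₂ j1) := by
    intro j1
    rw [Finset.sum_ite_eq univ j1 (fun j2 => ((w:ℝ) ^ d * (2:ℝ) ^ d) * (g₁ j1 * g₂ j2))]
    simp
  rw [Finset.sum_congr rfl fun j1 _ => h2 j1, ← Finset.mul_sum]

end ymom

section y2
variable {d w : ℕ} (g₁ g₂ : Fin d → ℝ)

lemma y2_term (hw : 0 < w) (p q : Fin d × Fin d) :
    ∑ η : Fin d → Fin w, ∑ β : Fin d → Bool,
      ((eps (β p.1) * eps (β p.2)) * ((if η p.1 = η p.2 then (1:ℝ) else 0) * (g₁ p.1 * g₂ p.2))) *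
      ((eps (β q.1) * eps (β q.2)) * ((if η q.1 = η q.2 then (1:ℝ) else 0) * (g₁ q.1 * g₂ q.2)))
    = ((2:ℝ) ^ d * (if p.1 = p.2 ∧ q.1 = q.2 then (w:ℝ) ^ d
        else if (p.1 = q.1 ∧ p.2 = q.2) ∨ (p.1 = q.2 ∧ p.2 = q.1) then (w:ℝ) ^ d / w else 0))
      * ((g₁ p.1 * g₂ p.2) * (g₁ q.1 * g₂ q.2)) := by
  have h1 : ∀ (η : Fin d → Fin w) (β : Fin d → Bool),
      ((eps (β p.1) * eps (β p.2)) * ((if η p.1 = η p.2 then (1:ℝ) else 0) * (g₁ p.1 * g₂ p.2))) *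
      ((eps (β q.1) * eps (β q.2)) * ((if η q.1 = η q.2 then (1:ℝ) else 0) * (g₁ q.1 * g₂ q.2)))
      = ((eps (β p.1) * eps (β p.2) * eps (β q.1) * eps (β q.2)) *
          ((if η p.1 = η p.2 then (1:ℝ) else 0) * (if η q.1 = η q.2 then (1:ℝ) else 0)))
        * ((g₁ p.1 * g₂ p.2) * (g₁ q.1 * g₂ q.2)) := fun η β => by ring
  calc ∑ η : Fin d → Fin w, ∑ β : Fin d → Bool,
      ((eps (β p.1) * eps (β p.2)) * ((if η p.1 = η p.2 then (1:ℝ) else 0) * (g₁ p.1 * g₂ p.2))) *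
      ((eps (β q.1) * eps (β q.2)) * ((if η q.1 = η q.2 then (1:ℝ) else 0) * (g₁ q.1 * g₂ q.2)))
      = ∑ η : Fin d → Fin w, (∑ β : Fin d → Bool,
          (eps (β p.1) * eps (β p.2) * eps (β q.1) * eps (β q.2)) *
          ((if η p.1 = η p.2 then (1:ℝ) else 0) * (if η q.1 = η q.2 then (1:ℝ) else 0)))
        * ((g₁ p.1 * g₂ p.2) * (g₁ q.1 * g₂ q.2)) := by
        refine Finset.sum_congr rfl fun η _ => ?_
        rw [Finset.sum_congr rfl fun β (_ : β ∈ (univ : Finset (Fin d → Bool))) => h1 η β,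
          ← Finset.sum_mul]
    _ = (∑ η : Fin d → Fin w, ∑ β : Fin d → Bool,
          (eps (β p.1) * eps (β p.2) * eps (β q.1) * eps (β q.2)) *
          ((if η p.1 = η p.2 then (1:ℝ) else 0) * (if η q.1 = η q.2 then (1:ℝ) else 0)))
        * ((g₁ p.1 * g₂ p.2) * (g₁ q.1 * g₂ q.2)) := by rw [← Finset.sum_mul]
    _ = _ := by rw [master hw p.1 p.2 q.1 q.2]

lemma sum_Y2_raw (hw : 0 < w) :
    ∑ x : (Fin d → Fin w) × (Fin d → Bool), (Yf d w g₁ g₂ x) ^ 2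
    = ∑ p : Fin d × Fin d, ∑ q : Fin d × Fin d,
      ((2:ℝ) ^ d * (if p.1 = p.2 ∧ q.1 = q.2 then (w:ℝ) ^ d
        else if (p.1 = q.1 ∧ p.2 = q.2) ∨ (p.1 = q.2 ∧ p.2 = q.1) then (w:ℝ) ^ d / w else 0))
      * ((g₁ p.1 * g₂ p.2) * (g₁ q.1 * g₂ q.2)) := by
  rw [Fintype.sum_prod_type]
  have hexp : ∀ (η : Fin d → Fin w) (β : Fin d → Bool),
      (Yf d w g₁ g₂ (η, β)) ^ 2
      = ∑ p : Fin d × Fin d, ∑ q : Fin d × Fin d,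
        ((eps (β p.1) * eps (β p.2)) * ((if η p.1 = η p.2 then (1:ℝ) else 0) * (g₁ p.1 * g₂ p.2))) *
        ((eps (β q.1) * eps (β q.2)) * ((if η q.1 = η q.2 then (1:ℝ) else 0) * (g₁ q.1 * g₂ q.2))) := by
    intro η β
    rw [sq, Yf, Finset.sum_mul_sum]
  calc ∑ η : Fin d → Fin w, ∑ β : Fin d → Bool, (Yf d w g₁ g₂ (η, β)) ^ 2
      = ∑ η : Fin d → Fin w, ∑ p : Fin d × Fin d, ∑ β : Fin d → Bool, ∑ q : Fin d × Fin d,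
        ((eps (β p.1) * eps (β p.2)) * ((if η p.1 = η p.2 then (1:ℝ) else 0) * (g₁ p.1 * g₂ p.2))) *
        ((eps (β q.1) * eps (β q.2)) * ((if η q.1 = η q.2 then (1:ℝ) else 0) * (g₁ q.1 * g₂ q.2))) := by
        refine Finset.sum_congr rfl fun η _ => ?_
        rw [Finset.sum_congr rfl fun β (_ : β ∈ univ) => hexp η β]
        exact Finset.sum_comm
    _ = ∑ p : Fin d × Fin d, ∑ η : Fin d → Fin w, ∑ β : Fin d → Bool, ∑ q : Fin d × Fin d,
        ((eps (β p.1) * eps (β p.2)) * ((if η p.1 = η p.2 then (1:ℝ) else 0) * (g₁ p.1 * g₂ p.2))) *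
        ((eps (β q.1) * eps (β q.2)) * ((if η q.1 = η q.2 then (1:ℝ) else 0) * (g₁ q.1 * g₂ q.2))) :=
        Finset.sum_comm
    _ = ∑ p : Fin d × Fin d, ∑ q : Fin d × Fin d, ∑ η : Fin d → Fin w, ∑ β : Fin d → Bool,
        ((eps (β p.1) * eps (β p.2)) * ((if η p.1 = η p.2 then (1:ℝ) else 0) * (g₁ p.1 * g₂ p.2))) *
        ((eps (β q.1) * eps (β q.2)) * ((if η q.1 = η q.2 then (1:ℝ) else 0) * (g₁ q.1 * g₂ q.2))) := by
        refine Finset.sum_congr rfl fun p _ => ?_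
        calc ∑ η : Fin d → Fin w, ∑ β : Fin d → Bool, ∑ q : Fin d × Fin d, _
            = ∑ η : Fin d → Fin w, ∑ q : Fin d × Fin d, ∑ β : Fin d → Bool, _ :=
              Finset.sum_congr rfl fun η _ => Finset.sum_comm
          _ = _ := Finset.sum_comm
    _ = _ := Finset.sum_congr rfl fun p _ => Finset.sum_congr rfl fun q _ => y2_term g₁ g₂ hw p q

end y2

section combi
variable {d w : ℕ} (g₁ g₂ : Fin d → ℝ)

lemma combi :
    ∑ p : Fin d × Fin d, ∑ q : Fin d × Fin d,
      ((2:ℝ) ^ d * (if p.1 = p.2 ∧ q.1 = q.2 then (w:ℝ) ^ d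
        else if (p.1 = q.1 ∧ p.2 = q.2) ∨ (p.1 = q.2 ∧ p.2 = q.1) then (w:ℝ) ^ d / w else 0))
      * ((g₁ p.1 * g₂ p.2) * (g₁ q.1 * g₂ q.2))
    = ((w:ℝ) ^ d * (2:ℝ) ^ d) * ((∑ j, g₁ j * g₂ j) ^ 2
        + (1 / w) * ((∑ p : Fin d × Fin d, if p.1 = p.2 then 0 else g₁ p.1 ^ 2 * g₂ p.2 ^ 2)
          + (∑ p : Fin d × Fin d,
              if p.1 = p.2 then 0 else (g₁ p.1 * g₂ p.1) * (g₁ p.2 * g₂ p.2)))) := by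
  set K2 : ℝ := (w:ℝ) ^ d / w with hK2
  -- pointwise decomposition of the nested if
  have hM : ∀ p q : Fin d × Fin d,
      (if p.1 = p.2 ∧ q.1 = q.2 then (w:ℝ) ^ d
        else if (p.1 = q.1 ∧ p.2 = q.2) ∨ (p.1 = q.2 ∧ p.2 = q.1) then K2 else 0)
      = (if p.1 = p.2 ∧ q.1 = q.2 then (w:ℝ) ^ d else 0)
        + ((if q = p ∧ ¬(p.1 = p.2) then K2 else 0)
          + (if q = (p.2, p.1) ∧ ¬(p.1 = p.2) then K2 else 0)) := by
    intro p q
    by_cases h1 : p.1 = p.2 ∧ q.1 = q.2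
    · rw [if_pos h1, if_pos h1, if_neg (fun h => h.2 h1.1), if_neg (fun h => h.2 h1.1)]
      ring
    · rw [if_neg h1, if_neg h1]
      by_cases hq : q = p
      · subst hq
        have hne : ¬ q.1 = q.2 := fun h => h1 ⟨h, h⟩
        rw [if_pos (Or.inl ⟨rfl, rfl⟩), if_pos ⟨rfl, hne⟩,
          if_neg (fun h => hne (congrArg Prod.fst h.1))]
        ring
      · by_cases hq2 : q = (p.2, p.1)
        · subst hq2
          have hne : ¬ p.1 = p.2 := fun h => hq (Prod.ext_iff.mpr ⟨h.symm, h⟩)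
          rw [if_pos (Or.inr ⟨rfl, rfl⟩), if_neg (fun h => hq h.1), if_pos ⟨rfl, hne⟩]
          ring
        · have hnor : ¬((p.1 = q.1 ∧ p.2 = q.2) ∨ (p.1 = q.2 ∧ p.2 = q.1)) := by
            rintro (⟨ha, hb⟩ | ⟨ha, hb⟩)
            · exact hq (Prod.ext_iff.mpr ⟨ha.symm, hb.symm⟩)
            · exact hq2 (Prod.ext_iff.mpr ⟨hb.symm, ha.symm⟩)
          rw [if_neg hnor, if_neg (fun h => hq h.1), if_neg (fun h => hq2 h.1)]
          ring
  have hsplit : ∀ p q : Fin d × Fin d,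
      ((2:ℝ) ^ d * (if p.1 = p.2 ∧ q.1 = q.2 then (w:ℝ) ^ d
        else if (p.1 = q.1 ∧ p.2 = q.2) ∨ (p.1 = q.2 ∧ p.2 = q.1) then K2 else 0))
      * ((g₁ p.1 * g₂ p.2) * (g₁ q.1 * g₂ q.2))
      = ((w:ℝ) ^ d * (2:ℝ) ^ d) *
          ((if p.1 = p.2 then g₁ p.1 * g₂ p.2 else 0) * (if q.1 = q.2 then g₁ q.1 * g₂ q.2 else 0))
        + ((if q = p then (if p.1 = p.2 then 0
              else ((2:ℝ) ^ d * K2) * (g₁ p.1 ^ 2 * g₂ p.2 ^ 2)) else 0)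
          + (if q = (p.2, p.1) then (if p.1 = p.2 then 0
              else ((2:ℝ) ^ d * K2) * ((g₁ p.1 * g₂ p.1) * (g₁ p.2 * g₂ p.2))) else 0)) := by
    intro p q
    have S1 : ((2:ℝ) ^ d * (if p.1 = p.2 ∧ q.1 = q.2 then (w:ℝ) ^ d else 0))
        * ((g₁ p.1 * g₂ p.2) * (g₁ q.1 * g₂ q.2))
        = ((w:ℝ) ^ d * (2:ℝ) ^ d) *
          ((if p.1 = p.2 then g₁ p.1 * g₂ p.2 else 0) * (if q.1 = q.2 then g₁ q.1 * g₂ q.2 else 0)) := by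
      by_cases h1 : p.1 = p.2
      · by_cases h2 : q.1 = q.2
        · rw [if_pos ⟨h1, h2⟩, if_pos h1, if_pos h2]; ring
        · rw [if_neg (fun h => h2 h.2), if_pos h1, if_neg h2]; ring
      · rw [if_neg (fun h => h1 h.1), if_neg h1]; ring
    have S2 : ((2:ℝ) ^ d * (if q = p ∧ ¬(p.1 = p.2) then K2 else 0))
        * ((g₁ p.1 * g₂ p.2) * (g₁ q.1 * g₂ q.2))
        = (if q = p then (if p.1 = p.2 then 0
            else ((2:ℝ) ^ d * K2) * (g₁ p.1 ^ 2 * g₂ p.2 ^ 2)) else 0) := by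
      by_cases hq : q = p
      · by_cases h1 : p.1 = p.2
        · rw [if_neg (fun h => h.2 h1), if_pos hq, if_pos h1]; ring
        · rw [if_pos ⟨hq, h1⟩, if_pos hq, if_neg h1, hq]; ring
      · rw [if_neg (fun h => hq h.1), if_neg hq]; ring
    have S3 : ((2:ℝ) ^ d * (if q = (p.2, p.1) ∧ ¬(p.1 = p.2) then K2 else 0))
        * ((g₁ p.1 * g₂ p.2) * (g₁ q.1 * g₂ q.2))
        = (if q = (p.2, p.1) then (if p.1 = p.2 then 0
            else ((2:ℝ) ^ d * K2) * ((g₁ p.1 * g₂ p.1) * (g₁ p.2 * g₂ p.2))) else 0) := by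
      by_cases hq2 : q = (p.2, p.1)
      · by_cases h1 : p.1 = p.2
        · rw [if_neg (fun h => h.2 h1), if_pos hq2, if_pos h1]; ring
        · rw [if_pos ⟨hq2, h1⟩, if_pos hq2, if_neg h1, hq2]
          simp only [Prod.fst, Prod.snd]
          ring
      · rw [if_neg (fun h => hq2 h.1), if_neg hq2]; ring
    calc ((2:ℝ) ^ d * (if p.1 = p.2 ∧ q.1 = q.2 then (w:ℝ) ^ d
          else if (p.1 = q.1 ∧ p.2 = q.2) ∨ (p.1 = q.2 ∧ p.2 = q.1) then K2 else 0))
        * ((g₁ p.1 * g₂ p.2) * (g₁ q.1 * g₂ q.2))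
        = ((2:ℝ) ^ d * (if p.1 = p.2 ∧ q.1 = q.2 then (w:ℝ) ^ d else 0))
            * ((g₁ p.1 * g₂ p.2) * (g₁ q.1 * g₂ q.2))
          + (((2:ℝ) ^ d * (if q = p ∧ ¬(p.1 = p.2) then K2 else 0))
              * ((g₁ p.1 * g₂ p.2) * (g₁ q.1 * g₂ q.2))
            + ((2:ℝ) ^ d * (if q = (p.2, p.1) ∧ ¬(p.1 = p.2) then K2 else 0))
              * ((g₁ p.1 * g₂ p.2) * (g₁ q.1 * g₂ q.2))) := by
          rw [hM p q]; ring
      _ = _ := by rw [S1, S2, S3]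
  rw [Finset.sum_congr rfl fun p _ => Finset.sum_congr rfl fun q _ => hsplit p q]
  simp only [Finset.sum_add_distrib]
  have hA : ∑ p : Fin d × Fin d, ∑ q : Fin d × Fin d,
      ((w:ℝ) ^ d * (2:ℝ) ^ d) *
        ((if p.1 = p.2 then g₁ p.1 * g₂ p.2 else 0) * (if q.1 = q.2 then g₁ q.1 * g₂ q.2 else 0))
      = ((w:ℝ) ^ d * (2:ℝ) ^ d) * (∑ j, g₁ j * g₂ j) ^ 2 := by
    have hc : ∑ p : Fin d × Fin d, (if p.1 = p.2 then g₁ p.1 * g₂ p.2 else 0)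
        = ∑ j, g₁ j * g₂ j := by
      rw [Fintype.sum_prod_type]
      refine Finset.sum_congr rfl fun j1 _ => ?_
      rw [Finset.sum_ite_eq univ j1 (fun j2 => g₁ j1 * g₂ j2)]
      simp
    calc ∑ p : Fin d × Fin d, ∑ q : Fin d × Fin d,
        ((w:ℝ) ^ d * (2:ℝ) ^ d) *
          ((if p.1 = p.2 then g₁ p.1 * g₂ p.2 else 0) * (if q.1 = q.2 then g₁ q.1 * g₂ q.2 else 0))
        = ((w:ℝ) ^ d * (2:ℝ) ^ d) * ∑ p : Fin d × Fin d, ∑ q : Fin d × Fin d,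
            ((if p.1 = p.2 then g₁ p.1 * g₂ p.2 else 0) * (if q.1 = q.2 then g₁ q.1 * g₂ q.2 else 0)) := by
          rw [Finset.mul_sum]
          exact Finset.sum_congr rfl fun p _ => by rw [Finset.mul_sum]
      _ = _ := by rw [← Finset.sum_mul_sum, hc, sq]
  have hB : ∑ p : Fin d × Fin d, ∑ q : Fin d × Fin d,
      (if q = p then (if p.1 = p.2 then 0
          else ((2:ℝ) ^ d * K2) * (g₁ p.1 ^ 2 * g₂ p.2 ^ 2)) else 0)
      = ((2:ℝ) ^ d * K2) *
          ∑ p : Fin d × Fin d, (if p.1 = p.2 then 0 else g₁ p.1 ^ 2 * g₂ p.2 ^ 2) := by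
    rw [Finset.mul_sum]
    refine Finset.sum_congr rfl fun p _ => ?_
    rw [Finset.sum_ite_eq' univ p]
    by_cases h1 : p.1 = p.2 <;> simp [h1]
  have hC : ∑ p : Fin d × Fin d, ∑ q : Fin d × Fin d,
      (if q = (p.2, p.1) then (if p.1 = p.2 then 0
          else ((2:ℝ) ^ d * K2) * ((g₁ p.1 * g₂ p.1) * (g₁ p.2 * g₂ p.2))) else 0)
      = ((2:ℝ) ^ d * K2) *
          ∑ p : Fin d × Fin d, (if p.1 = p.2 then 0 else (g₁ p.1 * g₂ p.1) * (g₁ p.2 * g₂ p.2)) := by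
    rw [Finset.mul_sum]
    refine Finset.sum_congr rfl fun p _ => ?_
    rw [Finset.sum_ite_eq' univ (p.2, p.1)]
    by_cases h1 : p.1 = p.2 <;> simp [h1]
  rw [hA, hB, hC, hK2]
  ring

end combi


section zeq
lemma delta_sum {W : Type*} [Fintype W] [DecidableEq W] (a b : W) :
    ∑ k : W, (if a = k then (1:ℝ) else 0) * (if b = k then (1:ℝ) else 0)
    = if a = b then (1:ℝ) else 0 := by
  by_cases h : a = b
  · rw [if_pos h]
    have hterm : ∀ k, (if a = k then (1:ℝ) else 0) * (if b = k then (1:ℝ) else 0)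
        = (if a = k then (1:ℝ) else 0) := by
      intro k
      by_cases hk : a = k
      · simp [hk, h.symm.trans hk]
      · simp [hk]
    rw [Finset.sum_congr rfl (fun k _ => hterm k), Finset.sum_ite_eq univ a (fun _ => (1:ℝ))]
    simp
  · rw [if_neg h]
    refine Finset.sum_eq_zero fun k _ => ?_
    by_cases hk : a = k
    · have : ¬ b = k := fun hbk => h (hk.trans hbk.symm)
      simp [hk, this]
    · simp [hk]

lemma Z_eq (d w t : ℕ) (ht : 0 < t) (g₁ g₂ : Fin d → ℝ) (ω : SketchΩ d w t) :
    ∑ p : Fin t × Fin w,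
      (sketchMatrix d w t ω.1 ω.2).mulVec g₁ p * (sketchMatrix d w t ω.1 ω.2).mulVec g₂ p
    = (t:ℝ)⁻¹ * ∑ i : Fin t, Yf d w g₁ g₂ (ω.1 i, ω.2 i) := by
  have hsq : (Real.sqrt t)⁻¹ * (Real.sqrt t)⁻¹ = (t:ℝ)⁻¹ := by
    rw [← mul_inv, Real.mul_self_sqrt (by positivity)]
  have hmv : ∀ (g : Fin d → ℝ) (i : Fin t) (k : Fin w),
      (sketchMatrix d w t ω.1 ω.2).mulVec g (i, k)
      = ∑ j : Fin d, ((Real.sqrt t)⁻¹ * eps (ω.2 i j)) * ((if ω.1 i j = k then (1:ℝ) else 0) * g j) := by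
    intro g i k
    simp only [Matrix.mulVec, dotProduct, sketchMatrix, Matrix.of_apply, eps]
    exact Finset.sum_congr rfl fun j _ => by ring
  rw [Fintype.sum_prod_type]
  have hki : ∀ i : Fin t,
      ∑ k : Fin w, (sketchMatrix d w t ω.1 ω.2).mulVec g₁ (i, k) *
        (sketchMatrix d w t ω.1 ω.2).mulVec g₂ (i, k)
      = (t:ℝ)⁻¹ * Yf d w g₁ g₂ (ω.1 i, ω.2 i) := by
    intro i
    have hk : ∀ k : Fin w, (sketchMatrix d w t ω.1 ω.2).mulVec g₁ (i, k) *
        (sketchMatrix d w t ω.1 ω.2).mulVec g₂ (i, k)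
        = ∑ j1 : Fin d, ∑ j2 : Fin d,
          (((Real.sqrt t)⁻¹ * eps (ω.2 i j1)) * ((if ω.1 i j1 = k then (1:ℝ) else 0) * g₁ j1)) *
          (((Real.sqrt t)⁻¹ * eps (ω.2 i j2)) * ((if ω.1 i j2 = k then (1:ℝ) else 0) * g₂ j2)) := by
      intro k
      rw [hmv g₁ i k, hmv g₂ i k, Finset.sum_mul_sum]
    rw [Finset.sum_congr rfl fun k _ => hk k]
    have step1 : (∑ k : Fin w, ∑ j1 : Fin d, ∑ j2 : Fin d,
          (((Real.sqrt t)⁻¹ * eps (ω.2 i j1)) * ((if ω.1 i j1 = k then (1:ℝ) else 0) * g₁ j1)) *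
          (((Real.sqrt t)⁻¹ * eps (ω.2 i j2)) * ((if ω.1 i j2 = k then (1:ℝ) else 0) * g₂ j2)))
        = ∑ j1 : Fin d, ∑ j2 : Fin d, ∑ k : Fin w,
          (((Real.sqrt t)⁻¹ * eps (ω.2 i j1)) * ((if ω.1 i j1 = k then (1:ℝ) else 0) * g₁ j1)) *
          (((Real.sqrt t)⁻¹ * eps (ω.2 i j2)) * ((if ω.1 i j2 = k then (1:ℝ) else 0) * g₂ j2)) :=
      Finset.sum_comm.trans (Finset.sum_congr rfl fun j1 _ => Finset.sum_comm)
    rw [step1]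
    have hinner : ∀ j1 j2 : Fin d,
        ∑ k : Fin w,
          (((Real.sqrt t)⁻¹ * eps (ω.2 i j1)) * ((if ω.1 i j1 = k then (1:ℝ) else 0) * g₁ j1)) *
          (((Real.sqrt t)⁻¹ * eps (ω.2 i j2)) * ((if ω.1 i j2 = k then (1:ℝ) else 0) * g₂ j2))
        = (t:ℝ)⁻¹ * ((eps (ω.2 i j1) * eps (ω.2 i j2)) *
            ((if ω.1 i j1 = ω.1 i j2 then (1:ℝ) else 0) * (g₁ j1 * g₂ j2))) := by
      intro j1 j2
      have harr : ∀ k : Fin w,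
          (((Real.sqrt t)⁻¹ * eps (ω.2 i j1)) * ((if ω.1 i j1 = k then (1:ℝ) else 0) * g₁ j1)) *
          (((Real.sqrt t)⁻¹ * eps (ω.2 i j2)) * ((if ω.1 i j2 = k then (1:ℝ) else 0) * g₂ j2))
          = (((Real.sqrt t)⁻¹ * (Real.sqrt t)⁻¹) * ((eps (ω.2 i j1) * eps (ω.2 i j2)) * (g₁ j1 * g₂ j2)))
            * ((if ω.1 i j1 = k then (1:ℝ) else 0) * (if ω.1 i j2 = k then (1:ℝ) else 0)) :=
        fun k => by ring
      rw [Finset.sum_congr rfl fun k _ => harr k, ← Finset.mul_sum,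
        delta_sum (ω.1 i j1) (ω.1 i j2), hsq]
      ring
    rw [Finset.sum_congr rfl fun j1 _ =>
      Finset.sum_congr rfl fun j2 (_ : j2 ∈ univ) => hinner j1 j2]
    rw [Yf, Fintype.sum_prod_type]
    rw [Finset.mul_sum]
    exact Finset.sum_congr rfl fun j1 _ => by rw [Finset.mul_sum]
  rw [Finset.sum_congr rfl fun i _ => hki i, ← Finset.mul_sum]

end zeq

theorem sketch_inner_second_moment (d w t : ℕ) (hd : 0 < d) (hw : 0 < w) (ht : 0 < t)
    (g₁ g₂ : Fin d → ℝ) :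
    sketchE d w t (fun ω =>
        (∑ p : Fin t × Fin w,
          (sketchMatrix d w t ω.1 ω.2).mulVec g₁ p *
            (sketchMatrix d w t ω.1 ω.2).mulVec g₂ p) ^ 2)
      ≤ (∑ j : Fin d, g₁ j * g₂ j) ^ 2
        + (2 / ((t : ℝ) * w)) * (∑ j : Fin d, (g₁ j) ^ 2) * (∑ j : Fin d, (g₂ j) ^ 2) := by
  classical
  have hwR : (0:ℝ) < w := by exact_mod_cast hw
  have htR : (0:ℝ) < t := by exact_mod_cast ht
  set c := ∑ j : Fin d, g₁ j * g₂ j with hc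
  set S1 := ∑ j : Fin d, (g₁ j) ^ 2 with hS1
  set S2 := ∑ j : Fin d, (g₂ j) ^ 2 with hS2
  set U1 := ∑ p : Fin d × Fin d, (if p.1 = p.2 then (0:ℝ) else g₁ p.1 ^ 2 * g₂ p.2 ^ 2) with hU1
  set U2 := ∑ p : Fin d × Fin d,
      (if p.1 = p.2 then (0:ℝ) else (g₁ p.1 * g₂ p.1) * (g₁ p.2 * g₂ p.2)) with hU2
  set N := (Fintype.card ((Fin d → Fin w) × (Fin d → Bool)) : ℝ) with hN
  have hNval : N = (w:ℝ) ^ d * 2 ^ d := by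
    rw [hN, Fintype.card_prod, Fintype.card_fun, Fintype.card_fun, Fintype.card_fin,
      Fintype.card_fin, Fintype.card_bool]
    push_cast
    ring
  have hNpos : (0:ℝ) < N := by rw [hNval]; positivity
  -- step 1: exact value of the expectation
  have hval : sketchE d w t (fun ω =>
      (∑ p : Fin t × Fin w,
        (sketchMatrix d w t ω.1 ω.2).mulVec g₁ p *
          (sketchMatrix d w t ω.1 ω.2).mulVec g₂ p) ^ 2)
      = c ^ 2 + (1 / ((t:ℝ) * w)) * (U1 + U2) := by
    rw [sketchE]
    have hcard : (Fintype.card (SketchΩ d w t) : ℝ) = N ^ t := by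
      have hΩ : Fintype.card (SketchΩ d w t)
          = Fintype.card ((Fin d → Fin w) × (Fin d → Bool)) ^ t := by
        simp [Fintype.card_prod, Fintype.card_fun, mul_pow]
      rw [hΩ, hN]
      push_cast
      ring
    rw [hcard]
    have hint : ∀ ω : SketchΩ d w t,
        (∑ p : Fin t × Fin w,
          (sketchMatrix d w t ω.1 ω.2).mulVec g₁ p *
            (sketchMatrix d w t ω.1 ω.2).mulVec g₂ p) ^ 2
        = ((t:ℝ)⁻¹ * ∑ i : Fin t, Yf d w g₁ g₂ (ω.1 i, ω.2 i)) ^ 2 := fun ω => by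
      rw [Z_eq d w t ht g₁ g₂ ω]
    rw [Finset.sum_congr rfl fun ω _ => hint ω]
    have htrans : (∑ ω : SketchΩ d w t, ((t:ℝ)⁻¹ * ∑ i : Fin t, Yf d w g₁ g₂ (ω.1 i, ω.2 i)) ^ 2)
        = ∑ u : Fin t → ((Fin d → Fin w) × (Fin d → Bool)),
            ((t:ℝ)⁻¹ * ∑ i : Fin t, Yf d w g₁ g₂ (u i)) ^ 2 := by
      rw [← Equiv.sum_comp
        (Equiv.arrowProdEquivProdArrow (Fin t) (fun _ => Fin d → Fin w) (fun _ => Fin d → Bool))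
        (fun ω : SketchΩ d w t => ((t:ℝ)⁻¹ * ∑ i : Fin t, Yf d w g₁ g₂ (ω.1 i, ω.2 i)) ^ 2)]
      exact Finset.sum_congr rfl fun u _ => rfl
    rw [htrans]
    have hexp : ∀ u : Fin t → ((Fin d → Fin w) × (Fin d → Bool)),
        ((t:ℝ)⁻¹ * ∑ i : Fin t, Yf d w g₁ g₂ (u i)) ^ 2
        = (t:ℝ)⁻¹ ^ 2 * ∑ i : Fin t, ∑ i' : Fin t, Yf d w g₁ g₂ (u i) * Yf d w g₁ g₂ (u i') := by
      intro u
      rw [mul_pow, sq (∑ i : Fin t, Yf d w g₁ g₂ (u i)), Finset.sum_mul_sum]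
    rw [Finset.sum_congr rfl fun u _ => hexp u, ← Finset.mul_sum]
    have hswap : (∑ u : Fin t → ((Fin d → Fin w) × (Fin d → Bool)),
          ∑ i : Fin t, ∑ i' : Fin t, Yf d w g₁ g₂ (u i) * Yf d w g₁ g₂ (u i'))
        = ∑ i : Fin t, ∑ i' : Fin t,
            ∑ u : Fin t → ((Fin d → Fin w) × (Fin d → Bool)),
              Yf d w g₁ g₂ (u i) * Yf d w g₁ g₂ (u i') :=
      Finset.sum_comm.trans (Finset.sum_congr rfl fun i _ => Finset.sum_comm)
    rw [hswap]
    have hSY : (∑ x : (Fin d → Fin w) × (Fin d → Bool), Yf d w g₁ g₂ x) = N * c := by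
      rw [sum_Y g₁ g₂ hw, hNval]
    have hSY2 : (∑ x : (Fin d → Fin w) × (Fin d → Bool), (Yf d w g₁ g₂ x) ^ 2)
        = N * (c ^ 2 + (1 / w) * (U1 + U2)) := by
      rw [sum_Y2_raw g₁ g₂ hw, combi g₁ g₂, hNval]
    have hpair : ∀ i i' : Fin t,
        (∑ u : Fin t → ((Fin d → Fin w) × (Fin d → Bool)),
          Yf d w g₁ g₂ (u i) * Yf d w g₁ g₂ (u i'))
        = if i = i' then N ^ t * (c ^ 2 + (1 / w) * (U1 + U2)) else N ^ t * c ^ 2 := by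
      intro i i'
      by_cases hii : i = i'
      · subst hii
        rw [if_pos rfl]
        have h1 := sum_fn_one (A := Fin t) (B := (Fin d → Fin w) × (Fin d → Bool)) i
          (fun x => (Yf d w g₁ g₂ x) ^ 2)
        simp only [Fintype.card_fin] at h1
        rw [← hN, hSY2] at h1
        have hsqq : ∀ u : Fin t → ((Fin d → Fin w) × (Fin d → Bool)),
            Yf d w g₁ g₂ (u i) * Yf d w g₁ g₂ (u i) = (Yf d w g₁ g₂ (u i)) ^ 2 :=
          fun u => (sq _).symm
        rw [Finset.sum_congr rfl fun u _ => hsqq u]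
        apply mul_right_cancel₀ hNpos.ne'
        rw [h1]
        ring
      · rw [if_neg hii]
        have h2 := sum_fn_two (A := Fin t) (B := (Fin d → Fin w) × (Fin d → Bool)) hii
          (Yf d w g₁ g₂) (Yf d w g₁ g₂)
        simp only [Fintype.card_fin] at h2
        rw [← hN, hSY] at h2
        apply mul_right_cancel₀ (pow_ne_zero 2 hNpos.ne')
        rw [h2]
        ring
    rw [Finset.sum_congr rfl fun i _ => Finset.sum_congr rfl fun i' _ => hpair i i']
    have hdouble : (∑ _i : Fin t, ∑ i' : Fin t,
          (if _i = i' then N ^ t * (c ^ 2 + (1 / w) * (U1 + U2)) else N ^ t * c ^ 2))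
        = (t:ℝ) * (N ^ t * (c ^ 2 + (1 / w) * (U1 + U2)))
          + ((t:ℝ) ^ 2 - t) * (N ^ t * c ^ 2) := by
      set D := N ^ t * (c ^ 2 + (1 / w) * (U1 + U2)) with hD
      set E := N ^ t * c ^ 2 with hE
      have hrow : ∀ i : Fin t, (∑ i' : Fin t, (if i = i' then D else E)) = (t:ℝ) * E + (D - E) := by
        intro i
        have hpt : ∀ i' : Fin t, (if i = i' then D else E)
            = E + (if i = i' then D - E else 0) := by
          intro i'
          by_cases h : i = i' <;> simp [h]
        rw [Finset.sum_congr rfl fun i' _ => hpt i', Finset.sum_add_distrib,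
          Finset.sum_const, Finset.card_univ, Fintype.card_fin,
          Finset.sum_ite_eq univ i (fun _ => D - E)]
        simp
      rw [Finset.sum_congr rfl fun i _ => hrow i, Finset.sum_const, Finset.card_univ,
        Fintype.card_fin]
      push_cast
      ring
    rw [hdouble]
    have hNt : (0:ℝ) < N ^ t := pow_pos hNpos t
    field_simp
    ring
  rw [hval]
  -- step 2: the inequality
  have hfull1 : (∑ p : Fin d × Fin d, g₁ p.1 ^ 2 * g₂ p.2 ^ 2) = S1 * S2 := by
    rw [hS1, hS2, Finset.sum_mul_sum, Fintype.sum_prod_type]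
  have hU1le : U1 ≤ S1 * S2 := by
    rw [← hfull1, hU1]
    refine Finset.sum_le_sum fun p _ => ?_
    by_cases h : p.1 = p.2
    · rw [if_pos h]; positivity
    · rw [if_neg h]
  have hfull2 : (∑ p : Fin d × Fin d, (g₁ p.1 * g₂ p.1) * (g₁ p.2 * g₂ p.2)) = c ^ 2 := by
    rw [hc, sq, Finset.sum_mul_sum, Fintype.sum_prod_type]
  have hdiag2 : (∑ p : Fin d × Fin d,
      (if p.1 = p.2 then (g₁ p.1 * g₂ p.1) * (g₁ p.2 * g₂ p.2) else 0))
      = ∑ j : Fin d, (g₁ j * g₂ j) ^ 2 := by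
    rw [Fintype.sum_prod_type]
    refine Finset.sum_congr rfl fun j1 _ => ?_
    rw [Finset.sum_ite_eq univ j1 (fun j2 => (g₁ j1 * g₂ j1) * (g₁ j2 * g₂ j2))]
    simp
    ring
  have hU2eq : U2 = c ^ 2 - ∑ j : Fin d, (g₁ j * g₂ j) ^ 2 := by
    rw [hU2, ← hfull2, ← hdiag2, ← Finset.sum_sub_distrib]
    refine Finset.sum_congr rfl fun p _ => ?_
    by_cases h : p.1 = p.2 <;> simp [h]
  have hcs : c ^ 2 ≤ S1 * S2 := by
    rw [hc, hS1, hS2]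
    exact Finset.sum_mul_sq_le_sq_mul_sq univ g₁ g₂
  have hU2le : U2 ≤ S1 * S2 := by
    have hpos : (0:ℝ) ≤ ∑ j : Fin d, (g₁ j * g₂ j) ^ 2 :=
      Finset.sum_nonneg fun j _ => sq_nonneg _
    linarith
  have hcoef : (0:ℝ) < 1 / ((t:ℝ) * w) := by positivity
  have hstep : (1 / ((t:ℝ) * w)) * (U1 + U2) ≤ (1 / ((t:ℝ) * w)) * (2 * (S1 * S2)) := by
    apply mul_le_mul_of_nonneg_left (by linarith) (le_of_lt hcoef)
  have hrw : (1 / ((t:ℝ) * w)) * (2 * (S1 * S2)) = (2 / ((t:ℝ) * w)) * S1 * S2 := by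
    ring
  linarith
end

section
/- Let S be the sparse random projection matrix built from d, w, t with m = t·w. Then for any fixed vector g ∈ ℝ^d, the reconstruction error of the project-then-unproject map satisfies E[‖Sᵀ S g − g‖₂²] ≤ (2d/m)·‖g‖₂². -/
open MeasureTheory Finset

namespace SketchAux

variable {d w t : ℕ}

def sVal (σ : Fin t → Fin d → Bool) (i : Fin t) (j : Fin d) : ℝ :=
  if σ i j then 1 else -1

def indVal (h : Fin t → Fin d → Fin w) (i : Fin t) (j k : Fin d) : ℝ :=
  if h i k = h i j then 1 else 0

lemma indVal_mul_self (h : Fin t → Fin d → Fin w) (i : Fin t) (j k : Fin d) :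
    indVal h i j k * indVal h i j k = indVal h i j k := by
  unfold indVal; split_ifs <;> norm_num

def flip (a : Fin t) (b : Fin d) (σ : Fin t → Fin d → Bool) : Fin t → Fin d → Bool :=
  Function.update σ a (Function.update (σ a) b (!(σ a b)))

lemma flip_apply (a : Fin t) (b : Fin d) (σ : Fin t → Fin d → Bool) (x : Fin t) (y : Fin d) :
    flip a b σ x y = if x = a ∧ y = b then !(σ x y) else σ x y := by
  unfold flip
  rcases eq_or_ne x a with rfl | hx
  · rw [Function.update_self]
    rcases eq_or_ne y b with rfl | hy
    · simp
    · simp [Function.update_of_ne hy, hy]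
  · simp [Function.update_of_ne hx, hx]

lemma flip_flip (a : Fin t) (b : Fin d) (σ : Fin t → Fin d → Bool) :
    flip a b (flip a b σ) = σ := by
  funext x y
  rw [flip_apply, flip_apply]
  by_cases h : x = a ∧ y = b
  · simp [h]
  · simp [h]

lemma sVal_flip (a : Fin t) (b : Fin d) (σ : Fin t → Fin d → Bool) (x : Fin t) (y : Fin d) :
    sVal (flip a b σ) x y = if x = a ∧ y = b then -sVal σ x y else sVal σ x y := by
  unfold sVal
  rw [flip_apply]
  by_cases h : x = a ∧ y = b
  · obtain ⟨rfl, rfl⟩ := h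
    simp only [and_self, if_true]
    cases hb : σ x y <;> simp [hb]
  · simp [h]

lemma sum_flip_zero (a : Fin t) (b : Fin d) (F : (Fin t → Fin d → Bool) → ℝ)
    (hF : ∀ σ, F (flip a b σ) = -F σ) : ∑ σ : Fin t → Fin d → Bool, F σ = 0 := by
  have hb : Function.Bijective (flip a b) :=
    Function.Involutive.bijective (fun σ => flip_flip a b σ)
  have h1 : ∑ σ : Fin t → Fin d → Bool, F (flip a b σ) = ∑ σ : Fin t → Fin d → Bool, F σ :=
    Fintype.sum_bijective _ hb _ _ (fun σ => rfl)
  have h2 : ∑ σ : Fin t → Fin d → Bool, F (flip a b σ) = -∑ σ : Fin t → Fin d → Bool, F σ := by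
    rw [← Finset.sum_neg_distrib]
    exact Finset.sum_congr rfl (fun σ _ => hF σ)
  linarith

lemma sigma_sum (i i' : Fin t) (j k k' : Fin d) (hk : k ≠ j) (hk' : k' ≠ j) :
    ∑ σ : Fin t → Fin d → Bool, sVal σ i j * sVal σ i k * (sVal σ i' j * sVal σ i' k')
      = if i = i' ∧ k = k' then (Fintype.card (Fin t → Fin d → Bool) : ℝ) else 0 := by
  by_cases hc : i = i' ∧ k = k'
  · obtain ⟨rfl, rfl⟩ := hc
    rw [if_pos ⟨rfl, rfl⟩]
    have h1 : ∀ σ : Fin t → Fin d → Bool,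
        sVal σ i j * sVal σ i k * (sVal σ i j * sVal σ i k) = 1 := by
      intro σ; unfold sVal; split_ifs <;> norm_num
    rw [Finset.sum_congr rfl (fun σ _ => h1 σ)]
    simp [Finset.card_univ]
  · rw [if_neg hc]
    by_cases hii : i = i'
    · subst hii
      have hkk : k ≠ k' := fun h => hc ⟨rfl, h⟩
      apply sum_flip_zero i k'
      intro σ
      have e1 : sVal (flip i k' σ) i j = sVal σ i j := by
        rw [sVal_flip, if_neg (fun h => hk' h.2.symm)]
      have e2 : sVal (flip i k' σ) i k = sVal σ i k := by
        rw [sVal_flip, if_neg (fun h => hkk h.2)]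
      have e4 : sVal (flip i k' σ) i k' = -sVal σ i k' := by
        rw [sVal_flip, if_pos ⟨rfl, rfl⟩]
      rw [e1, e2, e4]; ring
    · apply sum_flip_zero i' j
      intro σ
      have e1 : sVal (flip i' j σ) i j = sVal σ i j := by
        rw [sVal_flip, if_neg (fun h => hii h.1)]
      have e2 : sVal (flip i' j σ) i k = sVal σ i k := by
        rw [sVal_flip, if_neg (fun h => hii h.1)]
      have e3 : sVal (flip i' j σ) i' j = -sVal σ i' j := by
        rw [sVal_flip, if_pos ⟨rfl, rfl⟩]
      have e4 : sVal (flip i' j σ) i' k' = sVal σ i' k' := by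
        rw [sVal_flip, if_neg (fun h => hk' h.2)]
      rw [e1, e2, e3, e4]; ring

lemma card_ne {α : Type*} [Fintype α] [DecidableEq α] (a : α) :
    Fintype.card {x // x ≠ a} = Fintype.card α - 1 := by
  have := Fintype.card_subtype_compl (fun x : α => x = a)
  simpa [Fintype.card_subtype_eq] using this

lemma sum_eval {α β : Type*} [Fintype α] [DecidableEq α] [Fintype β] (a : α) (G : β → ℝ) :
    ∑ h : α → β, G (h a) = (Fintype.card ({ j // j ≠ a } → β) : ℝ) * ∑ x : β, G x := by
  rw [← Equiv.sum_comp (Equiv.funSplitAt a β).symm (fun h => G (h a))]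
  rw [Fintype.sum_prod_type]
  have h1 : ∀ (x : β) (r : { j // j ≠ a } → β),
      ((Equiv.funSplitAt a β).symm (x, r)) a = x := by
    intro x r
    rw [Equiv.funSplitAt_symm_apply, dif_pos rfl]
  simp_rw [h1]
  simp [Finset.sum_const, Finset.card_univ, ← Finset.sum_mul, mul_comm]

lemma sum_ind_pair {α β : Type*} [Fintype α] [DecidableEq α] [Fintype β] [DecidableEq β]
    (j k : α) (hk : k ≠ j) :
    ∑ u : α → β, (if u k = u j then (1:ℝ) else 0)
      = (Fintype.card ({ l // l ≠ j } → β) : ℝ) := by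
  rw [← Equiv.sum_comp (Equiv.funSplitAt j β).symm
      (fun u => if u k = u j then (1:ℝ) else 0)]
  rw [Fintype.sum_prod_type]
  have h1 : ∀ (x : β) (r : { l // l ≠ j } → β),
      (if ((Equiv.funSplitAt j β).symm (x, r)) k = ((Equiv.funSplitAt j β).symm (x, r)) j
        then (1:ℝ) else 0) = if r ⟨k, hk⟩ = x then 1 else 0 := by
    intro x r
    rw [Equiv.funSplitAt_symm_apply, Equiv.funSplitAt_symm_apply, dif_pos rfl, dif_neg hk]
  simp_rw [h1]
  rw [Finset.sum_comm]
  simp [Finset.card_univ]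

lemma h_sum (hd : 0 < d) (hw : 0 < w) (ht : 0 < t)
    (i : Fin t) (j k : Fin d) (hk : k ≠ j) :
    (∑ h : Fin t → Fin d → Fin w, indVal h i j k) * w
      = (Fintype.card (Fin t → Fin d → Fin w) : ℝ) := by
  have step : ∑ h : Fin t → Fin d → Fin w, indVal h i j k
      = (Fintype.card ({ j' // j' ≠ i } → (Fin d → Fin w)) : ℝ)
        * (Fintype.card ({ l // l ≠ j } → Fin w) : ℝ) := by
    rw [show (fun h : Fin t → Fin d → Fin w => indVal h i j k)
        = fun h => (fun u : Fin d → Fin w => if u k = u j then (1:ℝ) else 0) (h i) from rfl]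
    rw [sum_eval i (fun u : Fin d → Fin w => if u k = u j then (1:ℝ) else 0)]
    rw [sum_ind_pair j k hk]
  rw [step]
  have hcards : (Fintype.card ({ j' // j' ≠ i } → (Fin d → Fin w)))
        * (Fintype.card ({ l // l ≠ j } → Fin w)) * w
      = Fintype.card (Fin t → Fin d → Fin w) := by
    simp only [Fintype.card_fun, Fintype.card_fin, card_ne]
    rw [mul_assoc, ← pow_succ, Nat.sub_add_cancel hd, ← pow_succ, Nat.sub_add_cancel ht]
  rw [← hcards]
  push_cast
  ring

lemma expand (ht : 0 < t) (h : Fin t → Fin d → Fin w)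
    (sg : Fin t → Fin d → Bool) (g : Fin d → ℝ) (j : Fin d) :
    (sketchMatrix d w t h sg).transpose.mulVec ((sketchMatrix d w t h sg).mulVec g) j
      = (t : ℝ)⁻¹ * ∑ i : Fin t, ∑ k : Fin d,
          sVal sg i j * sVal sg i k * indVal h i j k * g k := by
  have hts : (Real.sqrt t)⁻¹ * (Real.sqrt t)⁻¹ = (t : ℝ)⁻¹ := by
    rw [← mul_inv, Real.mul_self_sqrt (by positivity)]
  simp only [Matrix.mulVec, Matrix.transpose_apply, dotProduct, sketchMatrix,
    Matrix.of_apply]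
  rw [Fintype.sum_prod_type]
  have key : ∀ i : Fin t,
      ∑ b : Fin w, ((Real.sqrt t)⁻¹ * (if sg i j then 1 else -1) * (if h i j = b then 1 else 0))
        * ∑ k : Fin d, ((Real.sqrt t)⁻¹ * (if sg i k then 1 else -1) * (if h i k = b then 1 else 0)) * g k
      = (t:ℝ)⁻¹ * ∑ k : Fin d, sVal sg i j * sVal sg i k * indVal h i j k * g k := by
    intro i
    have pt : ∀ b : Fin w,
        ((Real.sqrt t)⁻¹ * (if sg i j then (1:ℝ) else -1) * (if h i j = b then 1 else 0))
          * ∑ k : Fin d, ((Real.sqrt t)⁻¹ * (if sg i k then (1:ℝ) else -1) * (if h i k = b then 1 else 0)) * g k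
        = if h i j = b then
            ∑ k : Fin d, ((Real.sqrt t)⁻¹ * (if sg i j then (1:ℝ) else -1)) *
              (((Real.sqrt t)⁻¹ * (if sg i k then (1:ℝ) else -1)) * (if h i k = b then 1 else 0) * g k)
          else 0 := by
      intro b
      by_cases hb : h i j = b
      · rw [if_pos hb, if_pos hb, Finset.mul_sum]
        exact Finset.sum_congr rfl (fun k _ => by ring)
      · rw [if_neg hb, if_neg hb]
        ring
    rw [Finset.sum_congr rfl (fun b _ => pt b), Finset.sum_ite_eq]
    simp only [Finset.mem_univ, if_true]
    rw [Finset.mul_sum]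
    refine Finset.sum_congr rfl (fun k _ => ?_)
    rw [sVal, sVal, indVal, ← hts]
    ring
  rw [Finset.sum_congr rfl (fun i _ => key i), ← Finset.mul_sum]

/-- A single summand of the off-diagonal error. -/
def termT (d w t : ℕ) (g : Fin d → ℝ) (j : Fin d) (p : Fin t × Fin d)
    (ω : SketchΩ d w t) : ℝ :=
  sVal ω.2 p.1 j * sVal ω.2 p.1 p.2 * indVal ω.1 p.1 j p.2 * g p.2

lemma err_eq (ht : 0 < t) (g : Fin d → ℝ) (ω : SketchΩ d w t) (j : Fin d) :
    (sketchMatrix d w t ω.1 ω.2).transpose.mulVec ((sketchMatrix d w t ω.1 ω.2).mulVec g) j - g j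
      = (t : ℝ)⁻¹ * ∑ p ∈ Finset.univ ×ˢ Finset.univ.erase j, termT d w t g j p ω := by
  have htne : (t : ℝ) ≠ 0 := by positivity
  rw [expand ht ω.1 ω.2 g j, Finset.sum_product]
  have diag : ∀ i : Fin t,
      ∑ k : Fin d, sVal ω.2 i j * sVal ω.2 i k * indVal ω.1 i j k * g k
        = g j + ∑ k ∈ Finset.univ.erase j, termT d w t g j (i, k) ω := by
    intro i
    rw [← Finset.add_sum_erase _ _ (Finset.mem_univ j)]
    congr 1
    unfold sVal indVal
    rcases hb : ω.2 i j <;> simp [hb]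
  rw [Finset.sum_congr rfl (fun i _ => diag i), Finset.sum_add_distrib, Finset.sum_const,
    Finset.card_univ, Fintype.card_fin, nsmul_eq_mul]
  have : ∑ i : Fin t, ∑ k ∈ Finset.univ.erase j, termT d w t g j (i, k) ω
      = ∑ p ∈ Finset.univ ×ˢ Finset.univ.erase j, termT d w t g j p ω := by
    rw [Finset.sum_product]
  rw [this]
  field_simp
  ring

lemma split_sum (Fh : (Fin t → Fin d → Fin w) → ℝ) (Fσ : (Fin t → Fin d → Bool) → ℝ) :
    ∑ ω : SketchΩ d w t, Fh ω.1 * Fσ ω.2 = (∑ h, Fh h) * (∑ σ, Fσ σ) := by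
  rw [Fintype.sum_prod_type]
  exact (Fintype.sum_mul_sum _ _).symm

lemma moment (hd : 0 < d) (hw : 0 < w) (ht : 0 < t) (g : Fin d → ℝ) (j : Fin d)
    (p q : Fin t × Fin d) (hp : p.2 ≠ j) (hq : q.2 ≠ j) :
    sketchE d w t (fun ω => termT d w t g j p ω * termT d w t g j q ω)
      = (if p = q then (w : ℝ)⁻¹ else 0) * (g p.2 * g q.2) := by
  obtain ⟨i, k⟩ := p
  obtain ⟨i', k'⟩ := q
  simp only at hp hq
  unfold sketchE termT
  have hsplit : ∀ ω : SketchΩ d w t,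
      (sVal ω.2 i j * sVal ω.2 i k * indVal ω.1 i j k * g k)
        * (sVal ω.2 i' j * sVal ω.2 i' k' * indVal ω.1 i' j k' * g k')
      = ((indVal ω.1 i j k * indVal ω.1 i' j k')
          * (sVal ω.2 i j * sVal ω.2 i k * (sVal ω.2 i' j * sVal ω.2 i' k'))) * (g k * g k') :=
    fun ω => by ring
  rw [Finset.sum_congr rfl (fun ω _ => hsplit ω), ← Finset.sum_mul,
    split_sum (fun h => indVal h i j k * indVal h i' j k')
      (fun σ => sVal σ i j * sVal σ i k * (sVal σ i' j * sVal σ i' k')),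
    sigma_sum i i' j k k' hp hq]
  have hcard : (Fintype.card (SketchΩ d w t) : ℝ)
      = (Fintype.card (Fin t → Fin d → Fin w) : ℝ)
        * (Fintype.card (Fin t → Fin d → Bool) : ℝ) := by
    rw [Fintype.card_prod]
    push_cast
    ring
  simp only [Prod.mk.injEq]
  by_cases hc : i = i' ∧ k = k'
  · obtain ⟨rfl, rfl⟩ := hc
    rw [if_pos ⟨rfl, rfl⟩, if_pos ⟨rfl, rfl⟩]
    rw [Finset.sum_congr rfl (fun h _ => indVal_mul_self h i j k)]
    have hs := h_sum hd hw ht i j k hp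
    haveI : Nonempty (Fin w) := ⟨⟨0, hw⟩⟩
    have hch : (0:ℝ) < (Fintype.card (Fin t → Fin d → Fin w) : ℝ) := by
      exact_mod_cast Fintype.card_pos
    have hcσ : (0:ℝ) < (Fintype.card (Fin t → Fin d → Bool) : ℝ) := by
      exact_mod_cast Fintype.card_pos
    have hwne : (w:ℝ) ≠ 0 := by positivity
    have hS : (∑ h : Fin t → Fin d → Fin w, indVal h i j k) ≠ 0 := by
      intro h0
      rw [h0, zero_mul] at hs
      linarith
    rw [hcard, ← hs]
    field_simp
  · rw [if_neg hc, if_neg hc]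
    simp

lemma sketchE_sum {ι : Type*} (s : Finset ι) (F : ι → SketchΩ d w t → ℝ) :
    sketchE d w t (fun ω => ∑ x ∈ s, F x ω) = ∑ x ∈ s, sketchE d w t (F x) := by
  unfold sketchE
  rw [Finset.sum_comm, Finset.sum_div]

lemma sketchE_mul (c : ℝ) (f : SketchΩ d w t → ℝ) :
    sketchE d w t (fun ω => c * f ω) = c * sketchE d w t f := by
  unfold sketchE
  rw [← Finset.mul_sum, mul_div_assoc]

end SketchAux

open SketchAux in
/-- reconstruction error of project-then-unproject:
`E[‖Sᵀ S g − g‖₂²] ≤ (2d/m)·‖g‖₂²` with `m = t·w`. -/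
theorem sketch_reconstruction_error (d w t : ℕ) (hd : 0 < d) (hw : 0 < w) (ht : 0 < t)
    (g : Fin d → ℝ) :
    sketchE d w t (fun ω =>
        ∑ j : Fin d,
          ((sketchMatrix d w t ω.1 ω.2).transpose.mulVec
              ((sketchMatrix d w t ω.1 ω.2).mulVec g) j - g j) ^ 2)
      ≤ (2 * (d : ℝ) / ((t : ℝ) * w)) * ∑ j : Fin d, (g j) ^ 2 := by
  have htne : (t:ℝ) ≠ 0 := by positivity
  have hwne : (w:ℝ) ≠ 0 := by positivity
  have integrand : (fun ω : SketchΩ d w t =>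
      ∑ j : Fin d, ((sketchMatrix d w t ω.1 ω.2).transpose.mulVec
          ((sketchMatrix d w t ω.1 ω.2).mulVec g) j - g j) ^ 2)
      = fun ω => ∑ j : Fin d, ∑ p ∈ Finset.univ ×ˢ Finset.univ.erase j,
          ∑ q ∈ Finset.univ ×ˢ Finset.univ.erase j,
            ((t:ℝ)⁻¹)^2 * (termT d w t g j p ω * termT d w t g j q ω) := by
    funext ω
    refine Finset.sum_congr rfl (fun j _ => ?_)
    rw [err_eq ht g ω j, mul_pow, sq (∑ p ∈ Finset.univ ×ˢ Finset.univ.erase j,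
      termT d w t g j p ω), Finset.sum_mul_sum, Finset.mul_sum]
    refine Finset.sum_congr rfl (fun p _ => ?_)
    rw [Finset.mul_sum]
  rw [integrand, sketchE_sum]
  have perj : ∀ j : Fin d,
      sketchE d w t (fun ω => ∑ p ∈ Finset.univ ×ˢ Finset.univ.erase j,
          ∑ q ∈ Finset.univ ×ˢ Finset.univ.erase j,
            ((t:ℝ)⁻¹)^2 * (termT d w t g j p ω * termT d w t g j q ω))
        = ((t:ℝ) * w)⁻¹ * ∑ k ∈ Finset.univ.erase j, g k ^ 2 := by
    intro j
    rw [sketchE_sum]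
    have h1 : ∀ p ∈ Finset.univ ×ˢ Finset.univ.erase j,
        sketchE d w t (fun ω => ∑ q ∈ Finset.univ ×ˢ Finset.univ.erase j,
            ((t:ℝ)⁻¹)^2 * (termT d w t g j p ω * termT d w t g j q ω))
          = ((t:ℝ)⁻¹)^2 * ((w:ℝ)⁻¹ * (g p.2 * g p.2)) := by
      intro p hp
      have hpj : p.2 ≠ j := (Finset.mem_erase.mp (Finset.mem_product.mp hp).2).1
      rw [sketchE_sum]
      have h2 : ∀ q ∈ Finset.univ ×ˢ Finset.univ.erase j,
          sketchE d w t (fun ω => ((t:ℝ)⁻¹)^2 * (termT d w t g j p ω * termT d w t g j q ω))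
            = ((t:ℝ)⁻¹)^2 * ((if p = q then (w:ℝ)⁻¹ else 0) * (g p.2 * g q.2)) := by
        intro q hq
        have hqj : q.2 ≠ j := (Finset.mem_erase.mp (Finset.mem_product.mp hq).2).1
        rw [sketchE_mul, moment hd hw ht g j p q hpj hqj]
      rw [Finset.sum_congr rfl h2, ← Finset.mul_sum]
      congr 1
      have h3 : ∀ q ∈ Finset.univ ×ˢ Finset.univ.erase j,
          (if p = q then (w:ℝ)⁻¹ else 0) * (g p.2 * g q.2)
            = if p = q then (w:ℝ)⁻¹ * (g p.2 * g q.2) else 0 := by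
        intro q _
        split_ifs <;> ring
      rw [Finset.sum_congr rfl h3, Finset.sum_ite_eq, if_pos hp]
    rw [Finset.sum_congr rfl h1, Finset.sum_product]
    dsimp only
    rw [Finset.sum_const, Finset.card_univ, Fintype.card_fin, nsmul_eq_mul]
    have h4 : ∑ k ∈ Finset.univ.erase j, ((t:ℝ)⁻¹)^2 * ((w:ℝ)⁻¹ * (g k * g k))
        = ((t:ℝ)⁻¹)^2 * (w:ℝ)⁻¹ * ∑ k ∈ Finset.univ.erase j, g k ^ 2 := by
      rw [Finset.mul_sum]
      exact Finset.sum_congr rfl (fun k _ => by ring)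
    rw [h4]
    field_simp
  rw [Finset.sum_congr rfl (fun j _ => perj j)]
  have hub : ∀ j : Fin d,
      ((t:ℝ) * w)⁻¹ * ∑ k ∈ Finset.univ.erase j, g k ^ 2
        ≤ ((t:ℝ) * w)⁻¹ * ∑ k : Fin d, g k ^ 2 := by
    intro j
    apply mul_le_mul_of_nonneg_left
    · exact Finset.sum_le_sum_of_subset_of_nonneg (Finset.subset_univ _)
        (fun k _ _ => sq_nonneg _)
    · positivity
  calc ∑ j : Fin d, ((t:ℝ) * w)⁻¹ * ∑ k ∈ Finset.univ.erase j, g k ^ 2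
      ≤ ∑ j : Fin d, ((t:ℝ) * w)⁻¹ * ∑ k : Fin d, g k ^ 2 :=
        Finset.sum_le_sum (fun j _ => hub j)
    _ = (d : ℝ) * (((t:ℝ) * w)⁻¹ * ∑ k : Fin d, g k ^ 2) := by
        rw [Finset.sum_const, Finset.card_univ, Fintype.card_fin, nsmul_eq_mul]
    _ ≤ (2 * (d : ℝ) / ((t : ℝ) * w)) * ∑ j : Fin d, (g j) ^ 2 := by
        have hnn : (0:ℝ) ≤ (d : ℝ) * (((t:ℝ) * w)⁻¹ * ∑ k : Fin d, g k ^ 2) := by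
          have : (0:ℝ) ≤ ∑ k : Fin d, g k ^ 2 :=
            Finset.sum_nonneg (fun k _ => sq_nonneg _)
          positivity
        have heq : (2 * (d : ℝ) / ((t : ℝ) * w)) * ∑ j : Fin d, (g j) ^ 2
            = 2 * ((d : ℝ) * (((t:ℝ) * w)⁻¹ * ∑ k : Fin d, g k ^ 2)) := by
          field_simp
        rw [heq]
        linarith
end

section
/- Let d and b be positive integers and c > 0. For every b-bit randomized compression scheme (C, v̂) for the ball B_d(c), the worst-case mean squared error satisfies sup over v ∈ B_d(c) of MSE(v) ≥ c²·2^(−2b/d). -/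
open MeasureTheory Finset

/-- A `b`-bit randomized compression scheme for the Euclidean ball of radius `c`
in `ℝ^d`: a Markov-kernel encoder `enc` into the message set `Fin (2^b)` and a
Markov-kernel decoder `dec` producing probability distributions on `ℝ^d` with
finite second moment; encoder and decoder randomness are independent. -/
structure CompressionScheme (d b : ℕ) (c : ℝ) where
  enc : (Fin d → ℝ) → Fin (2 ^ b) → ℝ
  dec : Fin (2 ^ b) → Measure (Fin d → ℝ)
  enc_nonneg : ∀ v k, 0 ≤ enc v k
  enc_sum_one : ∀ v : Fin d → ℝ, Real.sqrt (∑ j, (v j) ^ 2) ≤ c → ∑ k, enc v k = 1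
  dec_prob : ∀ k, IsProbabilityMeasure (dec k)
  dec_sq_integrable : ∀ k, Integrable (fun u : Fin d → ℝ => ∑ j, (u j) ^ 2) (dec k)

/-- Mean squared error of a compression scheme at input `v`. -/
noncomputable def MSE {d b : ℕ} {c : ℝ} (A : CompressionScheme d b c)
    (v : Fin d → ℝ) : ℝ :=
  ∑ k, A.enc v k * ∫ u, (∑ j, (u j - v j) ^ 2) ∂(A.dec k)

/-- for every `b`-bit randomized compression scheme for `B_d(c)`,
the worst-case MSE is at least `c²·2^(−2b/d)` (stated as: any uniform upper bound
`Cbd` on the MSE over the ball satisfies `Cbd ≥ c²·2^(−2b/d)`). -/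
theorem compression_mse_lower_bound (d b : ℕ) (hd : 0 < d) (hb : 0 < b)
    (c : ℝ) (hc : 0 < c) (A : CompressionScheme d b c) (Cbd : ℝ)
    (hCbd : ∀ v : Fin d → ℝ, Real.sqrt (∑ j, (v j) ^ 2) ≤ c → MSE A v ≤ Cbd) :
    c ^ 2 * (2 : ℝ) ^ (-(2 * (b : ℝ)) / (d : ℝ)) ≤ Cbd := by
  haveI hprob : ∀ k, IsProbabilityMeasure (A.dec k) := A.dec_prob
  haveI : NeZero (2 ^ b) := ⟨(pow_pos (by norm_num : (0:ℕ) < 2) b).ne'⟩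
  haveI : Nonempty (Fin d) := ⟨⟨0, hd⟩⟩
  -- coordinates are in L²
  have hmem : ∀ (k : Fin (2 ^ b)) (j : Fin d),
      MemLp (fun u : Fin d → ℝ => u j) 2 (A.dec k) := by
    intro k j
    haveI := hprob k
    rw [memLp_two_iff_integrable_sq (measurable_pi_apply j).aestronglyMeasurable]
    refine (A.dec_sq_integrable k).mono
      ((measurable_pi_apply j).pow_const 2).aestronglyMeasurable ?_
    filter_upwards with u
    rw [Real.norm_eq_abs, abs_pow, sq_abs, Real.norm_eq_abs]
    exact le_trans (Finset.single_le_sum (f := fun i => (u i) ^ 2)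
      (fun i _ => sq_nonneg _) (Finset.mem_univ j)) (le_abs_self _)
  -- decoder means
  set m : Fin (2 ^ b) → Fin d → ℝ := fun k j => ∫ u, u j ∂(A.dec k) with hm
  have hkey : ∀ (k : Fin (2 ^ b)) (v : Fin d → ℝ),
      ∑ j, (m k j - v j) ^ 2 ≤ ∫ u, ∑ j, (u j - v j) ^ 2 ∂(A.dec k) := by
    intro k v
    haveI := hprob k
    have hmem' : ∀ j, MemLp (fun u : Fin d → ℝ => u j - v j) 2 (A.dec k) :=
      fun j => (hmem k j).sub (memLp_const _)
    rw [integral_finset_sum _ (fun j _ => (hmem' j).integrable_sq)]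
    refine Finset.sum_le_sum (fun j _ => ?_)
    have h1 := ProbabilityTheory.variance_nonneg (fun u : Fin d → ℝ => u j - v j) (A.dec k)
    rw [ProbabilityTheory.variance_eq_sub (hmem' j)] at h1
    have h2 : (∫ u, (u j - v j) ∂(A.dec k)) = m k j - v j := by
      rw [integral_sub ((hmem k j).integrable one_le_two) (integrable_const _),
        integral_const]
      simp [hm]
    simp only [Pi.pow_apply] at h1
    rw [h2] at h1
    linarith
  -- covering property
  have hcov : ∀ v : Fin d → ℝ, Real.sqrt (∑ j, (v j) ^ 2) ≤ c →
      ∃ k, ∑ j, (m k j - v j) ^ 2 ≤ Cbd := by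
    intro v hv
    obtain ⟨k0, -, hk0⟩ := Finset.exists_min_image Finset.univ
      (fun k => ∑ j, (m k j - v j) ^ 2) ⟨0, Finset.mem_univ _⟩
    refine ⟨k0, ?_⟩
    calc ∑ j, (m k0 j - v j) ^ 2
        = (∑ k, A.enc v k) * (∑ j, (m k0 j - v j) ^ 2) := by
          rw [A.enc_sum_one v hv, one_mul]
      _ = ∑ k, A.enc v k * (∑ j, (m k0 j - v j) ^ 2) := by rw [Finset.sum_mul]
      _ ≤ ∑ k, A.enc v k * ∫ u, ∑ j, (u j - v j) ^ 2 ∂(A.dec k) :=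
          Finset.sum_le_sum (fun k _ => mul_le_mul_of_nonneg_left
            (le_trans (hk0 k (Finset.mem_univ k)) (hkey k v)) (A.enc_nonneg v k))
      _ = MSE A v := rfl
      _ ≤ Cbd := hCbd v hv
  have hCbd0 : 0 ≤ Cbd := by
    obtain ⟨k, hk⟩ := hcov 0 (by simp [hc.le])
    exact le_trans (Finset.sum_nonneg fun j _ => sq_nonneg _) hk
  -- covering of the ball in Euclidean space
  have hsub : Metric.closedBall (0 : EuclideanSpace ℝ (Fin d)) c ⊆
      ⋃ k : Fin (2 ^ b), Metric.closedBall
        ((WithLp.equiv 2 (Fin d → ℝ)).symm (m k)) (Real.sqrt Cbd) := by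
    intro x hx
    rw [Metric.mem_closedBall, EuclideanSpace.dist_eq] at hx
    have hx' : Real.sqrt (∑ j, (x j) ^ 2) ≤ c := by
      have he : ∀ i : Fin d, dist (x i) ((0 : EuclideanSpace ℝ (Fin d)) i) ^ 2
          = (x i) ^ 2 := by
        intro i
        have h0 : (0 : EuclideanSpace ℝ (Fin d)) i = 0 := rfl
        rw [h0, Real.dist_eq, sq_abs, sub_zero]
      rwa [Finset.sum_congr rfl fun i _ => he i] at hx
    obtain ⟨k, hk⟩ := hcov (fun j => x j) hx'
    refine Set.mem_iUnion.2 ⟨k, ?_⟩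
    rw [Metric.mem_closedBall, EuclideanSpace.dist_eq]
    refine Real.sqrt_le_sqrt ?_
    have he : ∀ i : Fin d, dist (x i) ((WithLp.equiv 2 (Fin d → ℝ)).symm (m k) i) ^ 2
        = (m k i - x i) ^ 2 := by
      intro i
      have h0 : (WithLp.equiv 2 (Fin d → ℝ)).symm (m k) i = m k i := rfl
      rw [h0, Real.dist_eq, sq_abs]
      ring
    rw [Finset.sum_congr rfl fun i _ => he i]
    exact hk
  -- volume comparison
  set V : ENNReal := ENNReal.ofReal
    (Real.sqrt Real.pi ^ Fintype.card (Fin d) / Real.Gamma (Fintype.card (Fin d) / 2 + 1)) with hV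
  have hVpos : V ≠ 0 := by
    rw [hV]
    simp only [ne_eq, ENNReal.ofReal_eq_zero, not_le]
    have h1 : (0:ℝ) < Real.sqrt Real.pi ^ Fintype.card (Fin d) :=
      pow_pos (Real.sqrt_pos.2 Real.pi_pos) _
    have h2 : (0:ℝ) < Real.Gamma ((Fintype.card (Fin d) : ℝ) / 2 + 1) :=
      Real.Gamma_pos_of_pos (by positivity)
    positivity
  have hVtop : V ≠ ⊤ := ENNReal.ofReal_ne_top
  have hvol : (ENNReal.ofReal c) ^ Fintype.card (Fin d) * V ≤
      (2 ^ b : ℕ) * ((ENNReal.ofReal (Real.sqrt Cbd)) ^ Fintype.card (Fin d) * V) := by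
    have h1 := measure_mono (μ := (volume : Measure (EuclideanSpace ℝ (Fin d)))) hsub
    have h2 := measure_iUnion_fintype_le (volume : Measure (EuclideanSpace ℝ (Fin d)))
      (fun k : Fin (2 ^ b) => Metric.closedBall
        ((WithLp.equiv 2 (Fin d → ℝ)).symm (m k)) (Real.sqrt Cbd))
    rw [EuclideanSpace.volume_closedBall] at h1
    simp only [EuclideanSpace.volume_closedBall] at h2
    rw [Finset.sum_const, Finset.card_univ, Fintype.card_fin, nsmul_eq_mul] at h2
    exact (h1.trans h2).trans_eq (by rw [hV])
  rw [Fintype.card_fin] at hvol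
  -- cancel V and pass to the reals
  have hle : (ENNReal.ofReal c) ^ d ≤
      (2 ^ b : ℕ) * (ENNReal.ofReal (Real.sqrt Cbd)) ^ d := by
    rw [← mul_assoc] at hvol
    exact (ENNReal.mul_le_mul_iff_left hVpos hVtop).1 hvol
  have hreal : c ^ d ≤ (2 : ℝ) ^ b * Real.sqrt Cbd ^ d := by
    have h3 : ((2 ^ b : ℕ) : ENNReal) * (ENNReal.ofReal (Real.sqrt Cbd)) ^ d
        = ENNReal.ofReal ((2 : ℝ) ^ b * Real.sqrt Cbd ^ d) := by
      rw [ENNReal.ofReal_mul (by positivity), ← ENNReal.ofReal_pow (Real.sqrt_nonneg _)]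
      congr 1
      rw [Nat.cast_pow, ENNReal.ofReal_pow (by norm_num : (0:ℝ) ≤ 2)]
      norm_num
    rw [h3, ← ENNReal.ofReal_pow hc.le] at hle
    exact (ENNReal.ofReal_le_ofReal_iff (by positivity)).1 hle
  -- final algebra
  have hdne : (d : ℝ) ≠ 0 := Nat.cast_ne_zero.2 hd.ne'
  have h4 : (c ^ d : ℝ) ^ ((2:ℝ) / d) ≤ ((2:ℝ) ^ b * Real.sqrt Cbd ^ d) ^ ((2:ℝ) / d) :=
    Real.rpow_le_rpow (by positivity) hreal (by positivity)
  have hL : (c ^ d : ℝ) ^ ((2:ℝ) / d) = c ^ 2 := by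
    rw [← Real.rpow_natCast c d, ← Real.rpow_natCast c 2,
      ← Real.rpow_mul hc.le]
    congr 1
    field_simp
    norm_num
  have hR : ((2:ℝ) ^ b * Real.sqrt Cbd ^ d) ^ ((2:ℝ) / d)
      = (2:ℝ) ^ ((2 * (b:ℝ)) / d) * Cbd := by
    rw [Real.mul_rpow (by positivity) (by positivity),
      ← Real.rpow_natCast (2:ℝ) b, ← Real.rpow_mul (by norm_num : (0:ℝ) ≤ 2),
      ← Real.rpow_natCast (Real.sqrt Cbd) d,
      ← Real.rpow_mul (Real.sqrt_nonneg _)]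
    have : (d : ℝ) * (2 / d) = 2 := by field_simp
    rw [this]
    have h5 : Real.sqrt Cbd ^ (2:ℝ) = Cbd := by
      rw [Real.rpow_two, Real.sq_sqrt hCbd0]
    rw [h5]
    congr 2
    field_simp
  rw [hL, hR] at h4
  have hT : (0:ℝ) < (2:ℝ) ^ ((2 * (b:ℝ)) / d) := Real.rpow_pos_of_pos (by norm_num) _
  have h6 : (2:ℝ) ^ (-(2 * (b:ℝ)) / d) = ((2:ℝ) ^ ((2 * (b:ℝ)) / d))⁻¹ := by
    rw [neg_div, Real.rpow_neg (by norm_num)]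
  rw [h6, ← div_eq_mul_inv, div_le_iff₀ hT]
  linarith [mul_comm Cbd ((2:ℝ) ^ ((2 * (b:ℝ)) / d))]
end

section
/- There exist universal constants C₀ > 0 and c₁ > 0 with the following property. Let d and b be positive integers with b ≤ c₁·d, and let c > 0. For every b-bit randomized compression scheme (C, v̂) for the ball B_d(c) that is unbiased, meaning Σ_{m ∈ M} C(v)({m}) · ∫ u dv̂(m)(u) = v for all v ∈ B_d(c), the worst-case mean squared error satisfies sup over v ∈ B_d(c) of MSE(v) ≥ C₀·c²·d/b. -/
open MeasureTheory Finset

/-- Sign value (`±1`) of a boolean. -/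
def chs (b : Bool) : ℝ := if b then 1 else -1

lemma chs_sq (b : Bool) : chs b ^ 2 = 1 := by cases b <;> simp [chs]

lemma exp_add_exp_neg_le (x : ℝ) :
    Real.exp x + Real.exp (-x) ≤ 2 * Real.exp (x ^ 2 / 2) := by
  have h := Real.cosh_le_exp_half_sq x
  rw [Real.cosh_eq] at h
  linarith

lemma mgf_cube (d : ℕ) (w : Fin d → ℝ) (t : ℝ) :
    ∑ σ : Fin d → Bool, Real.exp (t * ∑ j, chs (σ j) * w j)
      ≤ 2 ^ d * Real.exp (t ^ 2 * (∑ j, (w j) ^ 2) / 2) := by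
  have h1 : ∀ σ : Fin d → Bool,
      Real.exp (t * ∑ j, chs (σ j) * w j) = ∏ j, Real.exp (t * (chs (σ j) * w j)) := by
    intro σ
    rw [← Real.exp_sum, Finset.mul_sum]
  calc ∑ σ : Fin d → Bool, Real.exp (t * ∑ j, chs (σ j) * w j)
      = ∑ σ : Fin d → Bool, ∏ j, Real.exp (t * (chs (σ j) * w j)) := by
        exact Finset.sum_congr rfl fun σ _ => h1 σ
    _ = ∏ j, ∑ b : Bool, Real.exp (t * (chs b * w j)) := by
        rw [← Fintype.prod_sum fun j b => Real.exp (t * (chs b * w j))]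
    _ ≤ ∏ j, 2 * Real.exp ((t * w j) ^ 2 / 2) := by
        apply Finset.prod_le_prod
        · intro j _; positivity
        · intro j _
          have := exp_add_exp_neg_le (t * w j)
          simpa [chs, mul_comm, mul_left_comm, mul_assoc, Fintype.sum_bool,
            mul_neg, neg_mul] using this
    _ = 2 ^ d * Real.exp (t ^ 2 * (∑ j, (w j) ^ 2) / 2) := by
        rw [Finset.prod_mul_distrib, Finset.prod_const, ← Real.exp_sum]
        simp only [Finset.card_univ, Fintype.card_fin]
        congr 1
        rw [← Finset.sum_div, Finset.mul_sum]
        congr 2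
        exact Finset.sum_congr rfl fun j _ => by ring

lemma exists_good_sign (d N : ℕ) (w : Fin N → Fin d → ℝ) (s : ℝ) (hs : 0 < s)
    (hN : (N : ℝ) < Real.exp (s ^ 2 / 2)) :
    ∃ σ : Fin d → Bool, ∀ k, ∑ j, chs (σ j) * w k j ≤ s * Real.sqrt (∑ j, (w k j) ^ 2) := by
  classical
  by_contra hcon
  push_neg at hcon
  set Bad : Fin N → Finset (Fin d → Bool) := fun k =>
    Finset.univ.filter (fun σ => s * Real.sqrt (∑ j, (w k j) ^ 2) < ∑ j, chs (σ j) * w k j)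
  have hcard : ∀ k, ((Bad k).card : ℝ) ≤ 2 ^ d * Real.exp (-(s ^ 2) / 2) := by
    intro k
    set W : ℝ := Real.sqrt (∑ j, (w k j) ^ 2) with hW
    have hWnn : 0 ≤ W := Real.sqrt_nonneg _
    rcases eq_or_lt_of_le hWnn with hW0 | hWpos
    · -- W = 0 : all coordinates vanish, Bad k is empty
      have hle : ∑ j, (w k j) ^ 2 ≤ 0 := Real.sqrt_eq_zero'.mp hW0.symm
      have hsum0 : ∑ j, (w k j) ^ 2 = 0 :=
        le_antisymm hle (Finset.sum_nonneg fun j _ => sq_nonneg _)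
      have hw0 : ∀ j, w k j = 0 := by
        intro j
        have := (Finset.sum_eq_zero_iff_of_nonneg (fun j _ => sq_nonneg (w k j))).mp hsum0 j
          (Finset.mem_univ j)
        exact pow_eq_zero_iff two_ne_zero |>.mp this
      have hempty : Bad k = ∅ := by
        apply Finset.filter_false_of_mem
        intro σ _
        simp only [not_lt]
        calc ∑ j, chs (σ j) * w k j = 0 := by
              apply Finset.sum_eq_zero; intro j _; rw [hw0 j, mul_zero]
          _ ≤ s * W := by positivity
      rw [hempty]
      simp only [Finset.card_empty, Nat.cast_zero]
      positivity
    · -- W > 0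
      have hW2 : W ^ 2 = ∑ j, (w k j) ^ 2 :=
        Real.sq_sqrt (Finset.sum_nonneg fun j _ => sq_nonneg _)
      set t : ℝ := s / W with ht
      have htpos : 0 < t := div_pos hs hWpos
      have hkey : ((Bad k).card : ℝ) * Real.exp (s ^ 2)
          ≤ 2 ^ d * Real.exp (s ^ 2 / 2) := by
        have h1 : ((Bad k).card : ℝ) * Real.exp (s ^ 2)
            ≤ ∑ σ ∈ Bad k, Real.exp (t * ∑ j, chs (σ j) * w k j) := by
          have : ∀ σ ∈ Bad k, Real.exp (s ^ 2) ≤ Real.exp (t * ∑ j, chs (σ j) * w k j) := by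
            intro σ hσ
            apply Real.exp_le_exp.mpr
            have hσ' : s * W < ∑ j, chs (σ j) * w k j := (Finset.mem_filter.mp hσ).2
            calc s ^ 2 = t * (s * W) := by field_simp [ht]; rw [ht, div_mul_cancel₀ _ hWpos.ne']
              _ ≤ t * ∑ j, chs (σ j) * w k j := by
                  exact mul_le_mul_of_nonneg_left hσ'.le htpos.le
          calc ((Bad k).card : ℝ) * Real.exp (s ^ 2)
              = ∑ _σ ∈ Bad k, Real.exp (s ^ 2) := by rw [Finset.sum_const, nsmul_eq_mul]
            _ ≤ _ := Finset.sum_le_sum this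
        have h2 : ∑ σ ∈ Bad k, Real.exp (t * ∑ j, chs (σ j) * w k j)
            ≤ ∑ σ : Fin d → Bool, Real.exp (t * ∑ j, chs (σ j) * w k j) :=
          Finset.sum_le_sum_of_subset_of_nonneg (Finset.subset_univ _)
            (fun σ _ _ => (Real.exp_pos _).le)
        have h3 := mgf_cube d (w k) t
        have h4 : t ^ 2 * (∑ j, (w k j) ^ 2) / 2 = s ^ 2 / 2 := by
          rw [← hW2]
          field_simp [ht]
          rw [ht, div_pow, div_mul_cancel₀ _ (pow_pos hWpos 2).ne']
        rw [h4] at h3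
        calc ((Bad k).card : ℝ) * Real.exp (s ^ 2) ≤ _ := h1
          _ ≤ _ := h2
          _ ≤ _ := h3
      have h5 : Real.exp (-(s ^ 2) / 2) = Real.exp (s ^ 2 / 2) / Real.exp (s ^ 2) := by
        rw [← Real.exp_sub, show s ^ 2 / 2 - s ^ 2 = -(s ^ 2) / 2 by ring]
      rw [h5, ← mul_div_assoc]
      exact (le_div_iff₀ (Real.exp_pos _)).mpr hkey
  -- every sign vector is bad for some k
  have hcover : (Finset.univ : Finset (Fin d → Bool)) ⊆ Finset.univ.biUnion Bad := by
    intro σ _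
    obtain ⟨k, hk⟩ := hcon σ
    exact Finset.mem_biUnion.mpr ⟨k, Finset.mem_univ k, Finset.mem_filter.mpr ⟨Finset.mem_univ σ, hk⟩⟩
  have hcount : ((2 : ℝ) ^ d) ≤ ∑ k, ((Bad k).card : ℝ) := by
    have h1 : (Finset.univ : Finset (Fin d → Bool)).card ≤ ∑ k, (Bad k).card :=
      le_trans (Finset.card_le_card hcover) (Finset.card_biUnion_le)
    have h2 : (Finset.univ : Finset (Fin d → Bool)).card = 2 ^ d := by
      simp [Finset.card_univ]
    rw [h2] at h1
    calc ((2 : ℝ) ^ d) = ((2 ^ d : ℕ) : ℝ) := by push_cast; ring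
      _ ≤ ((∑ k, (Bad k).card : ℕ) : ℝ) := Nat.cast_le.mpr h1
      _ = ∑ k, ((Bad k).card : ℝ) := by push_cast; ring
  have hsum : ∑ k, ((Bad k).card : ℝ) ≤ (N : ℝ) * (2 ^ d * Real.exp (-(s ^ 2) / 2)) := by
    calc ∑ k, ((Bad k).card : ℝ) ≤ ∑ _k : Fin N, (2 ^ d * Real.exp (-(s ^ 2) / 2)) :=
          Finset.sum_le_sum fun k _ => hcard k
      _ = (N : ℝ) * (2 ^ d * Real.exp (-(s ^ 2) / 2)) := by
          rw [Finset.sum_const, nsmul_eq_mul]; simp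
  have hlt : (N : ℝ) * Real.exp (-(s ^ 2) / 2) < 1 := by
    have hpos := Real.exp_pos (-(s ^ 2) / 2)
    have hmul : Real.exp (-(s ^ 2) / 2) * Real.exp (s ^ 2 / 2) = 1 := by
      rw [← Real.exp_add, show -(s ^ 2) / 2 + s ^ 2 / 2 = 0 by ring, Real.exp_zero]
    nlinarith [Nat.cast_nonneg (α := ℝ) N]
  have h2d : (0:ℝ) < 2 ^ d := by positivity
  nlinarith

variable {α : Type*} [MeasurableSpace α]

lemma var_ineq (μ : Measure α) [IsProbabilityMeasure μ]
    {f : α → ℝ} (hf : Integrable f μ) (hf2 : Integrable (fun x => f x ^ 2) μ) :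
    (∫ x, f x ∂μ) ^ 2 ≤ ∫ x, f x ^ 2 ∂μ := by
  set m := ∫ x, f x ∂μ with hm
  have h0 : 0 ≤ ∫ x, (f x - m) ^ 2 ∂μ := integral_nonneg fun x => sq_nonneg _
  have heq : (fun x => (f x - m) ^ 2) = fun x => (f x ^ 2 - (2 * m) * f x) + m ^ 2 := by
    funext x; ring
  have hA : Integrable (fun x => f x ^ 2 - (2 * m) * f x) μ := hf2.sub (hf.const_mul _)
  have hint : ∫ x, (f x - m) ^ 2 ∂μ = (∫ x, f x ^ 2 ∂μ) - 2 * m * m + m ^ 2 := by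
    rw [heq, integral_add hA (integrable_const _),
      integral_sub hf2 (hf.const_mul (2 * m)), MeasureTheory.integral_const_mul, integral_const]
    simp [← hm]
  nlinarith [h0, hint]

variable {d : ℕ}

lemma int_coord_sq (ν : Measure (Fin d → ℝ)) [IsProbabilityMeasure ν]
    (hsq : Integrable (fun u : Fin d → ℝ => ∑ j, (u j) ^ 2) ν) (j : Fin d) :
    Integrable (fun u : Fin d → ℝ => (u j) ^ 2) ν := by
  apply hsq.mono ((measurable_pi_apply j).pow_const 2).aestronglyMeasurable
  filter_upwards with u
  rw [Real.norm_eq_abs, Real.norm_eq_abs, abs_of_nonneg (sq_nonneg _),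
    abs_of_nonneg (Finset.sum_nonneg fun i _ => sq_nonneg (u i))]
  exact Finset.single_le_sum (fun i _ => sq_nonneg (u i)) (Finset.mem_univ j)

lemma int_coord (ν : Measure (Fin d → ℝ)) [IsProbabilityMeasure ν]
    (hsq : Integrable (fun u : Fin d → ℝ => ∑ j, (u j) ^ 2) ν) (j : Fin d) :
    Integrable (fun u : Fin d → ℝ => u j) ν := by
  have hg : Integrable (fun u : Fin d → ℝ => 1 + ∑ i, (u i) ^ 2) ν :=
    (integrable_const 1).add hsq
  apply Integrable.mono' hg (measurable_pi_apply j).aestronglyMeasurable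
  filter_upwards with u
  rw [Real.norm_eq_abs]
  have h1 : (u j) ^ 2 ≤ ∑ i, (u i) ^ 2 :=
    Finset.single_le_sum (fun i _ => sq_nonneg (u i)) (Finset.mem_univ j)
  nlinarith [sq_nonneg (|u j| - 1), sq_abs (u j)]

lemma int_id (ν : Measure (Fin d → ℝ)) [IsProbabilityMeasure ν]
    (hsq : Integrable (fun u : Fin d → ℝ => ∑ j, (u j) ^ 2) ν) :
    Integrable (fun u : Fin d → ℝ => u) ν := by
  have hg : Integrable (fun u : Fin d → ℝ => 1 + ∑ i, (u i) ^ 2) ν :=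
    (integrable_const 1).add hsq
  apply Integrable.mono' hg measurable_id.aestronglyMeasurable
  filter_upwards with u
  have hnn : (0:ℝ) ≤ 1 + ∑ i, (u i) ^ 2 := by positivity
  have : ‖(u : Fin d → ℝ)‖ ≤ 1 + ∑ i, (u i) ^ 2 := by
    rw [pi_norm_le_iff_of_nonneg hnn]
    intro j
    rw [Real.norm_eq_abs]
    have h1 : (u j) ^ 2 ≤ ∑ i, (u i) ^ 2 :=
      Finset.single_le_sum (fun i _ => sq_nonneg (u i)) (Finset.mem_univ j)
    nlinarith [sq_nonneg (|u j| - 1), sq_abs (u j)]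
  exact this

lemma mean_coord (ν : Measure (Fin d → ℝ)) [IsProbabilityMeasure ν]
    (hsq : Integrable (fun u : Fin d → ℝ => ∑ j, (u j) ^ 2) ν) (j : Fin d) :
    ∫ u, u j ∂ν = (∫ u, u ∂ν) j := by
  have h := (ContinuousLinearMap.proj (R := ℝ) (φ := fun _ : Fin d => ℝ) j).integral_comp_comm
    (int_id ν hsq)
  simp only [ContinuousLinearMap.proj_apply] at h
  exact h

lemma int_coord_sub_sq (ν : Measure (Fin d → ℝ)) [IsProbabilityMeasure ν]
    (hsq : Integrable (fun u : Fin d → ℝ => ∑ j, (u j) ^ 2) ν) (j : Fin d) (a : ℝ) :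
    Integrable (fun u : Fin d → ℝ => (u j - a) ^ 2) ν := by
  have heq : (fun u : Fin d → ℝ => (u j - a) ^ 2)
      = fun u => ((u j) ^ 2 - (2 * a) * u j) + a ^ 2 := by funext u; ring
  rw [heq]
  exact ((int_coord_sq ν hsq j).sub ((int_coord ν hsq j).const_mul (2 * a))).add
    (integrable_const _)

set_option maxHeartbeats 1000000 in
/-- there exist universal constants `C₀ > 0` and `c₁ > 0` such that
for every unbiased `b`-bit compression scheme for `B_d(c)` with `b ≤ c₁·d`, the
worst-case MSE is at least `C₀·c²·d/b` (stated as: any uniform upper bound `Cbd`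
on the MSE over the ball satisfies `Cbd ≥ C₀·c²·d/b`). -/
theorem unbiased_compression_mse_lower_bound :
    ∃ C₀ : ℝ, 0 < C₀ ∧ ∃ c₁ : ℝ, 0 < c₁ ∧
      ∀ (d b : ℕ) (c : ℝ) (A : CompressionScheme d b c),
      0 < d → 0 < b → 0 < c → (b : ℝ) ≤ c₁ * d →
      -- unbiasedness: the mixture of decoder means equals the input
      (∀ v : Fin d → ℝ, Real.sqrt (∑ j, (v j) ^ 2) ≤ c →
        ∑ k, A.enc v k • (∫ u, u ∂(A.dec k)) = v) →
      ∀ Cbd : ℝ,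
        (∀ v : Fin d → ℝ, Real.sqrt (∑ j, (v j) ^ 2) ≤ c → MSE A v ≤ Cbd) →
        C₀ * c ^ 2 * d / b ≤ Cbd := by
  have hlog2 : 0 < Real.log 2 := Real.log_pos (by norm_num)
  refine ⟨(8 * Real.log 2)⁻¹, by positivity, (8 * Real.log 2)⁻¹, by positivity, ?_⟩
  intro d b c A hd hb hc hbd hunb Cbd hCbd
  have hdpos : (0:ℝ) < d := by exact_mod_cast hd
  have hbpos : (0:ℝ) < b := by exact_mod_cast hb
  have hsqd : (0:ℝ) < Real.sqrt d := Real.sqrt_pos.mpr hdpos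
  -- the threshold s
  set s : ℝ := Real.sqrt (2 * (b + 1) * Real.log 2) with hsdef
  have hs2 : s ^ 2 = 2 * (b + 1) * Real.log 2 := Real.sq_sqrt (by positivity)
  have hspos : 0 < s := Real.sqrt_pos.mpr (by positivity)
  have hN : ((2 ^ b : ℕ) : ℝ) < Real.exp (s ^ 2 / 2) := by
    have he : Real.exp (s ^ 2 / 2) = 2 ^ (b + 1) := by
      rw [hs2, show 2 * ((b:ℝ) + 1) * Real.log 2 / 2 = ((b + 1 : ℕ) : ℝ) * Real.log 2 by
        push_cast; ring, Real.exp_nat_mul, Real.exp_log (by norm_num : (0:ℝ) < 2)]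
    rw [he]
    push_cast
    rw [pow_succ]
    nlinarith [pow_pos (by norm_num : (0:ℝ) < 2) b]
  -- decoder means
  set μm : Fin (2 ^ b) → Fin d → ℝ := fun k => ∫ u, u ∂(A.dec k) with hμm
  obtain ⟨σ, hσ⟩ := exists_good_sign d (2 ^ b) μm s hspos hN
  -- the hard input
  set v : Fin d → ℝ := fun j => c * chs (σ j) / Real.sqrt d with hv
  have hvj : ∀ j, v j ^ 2 = c ^ 2 / d := by
    intro j
    rw [hv]
    rw [div_pow, mul_pow, chs_sq, Real.sq_sqrt hdpos.le, mul_one]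
  have hvsum : ∑ j, v j ^ 2 = c ^ 2 := by
    rw [Finset.sum_congr rfl fun j _ => hvj j, Finset.sum_const, Finset.card_univ,
      Fintype.card_fin, nsmul_eq_mul]
    field_simp
  have hball : Real.sqrt (∑ j, v j ^ 2) ≤ c := by rw [hvsum, Real.sqrt_sq hc.le]
  have hp1 : ∑ k, A.enc v k = 1 := A.enc_sum_one v hball
  have hcomp : ∀ j, ∑ k, A.enc v k * μm k j = v j := by
    intro j
    have h := congrFun (hunb v hball) j
    simpa [Finset.sum_apply, Pi.smul_apply, smul_eq_mul, hμm] using h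
  set M : Fin (2 ^ b) → ℝ := fun k => ∑ j, (μm k j) ^ 2 with hM
  have hMnn : ∀ k, 0 ≤ M k := fun k => Finset.sum_nonneg fun j _ => sq_nonneg _
  -- step (A)
  have e1 : c ^ 2 = ∑ j, v j * v j := by
    rw [← hvsum]; exact Finset.sum_congr rfl fun j _ => (sq (v j))
  have e2 : ∑ j, v j * v j = ∑ k, A.enc v k * (∑ j, v j * μm k j) := by
    calc ∑ j, v j * v j = ∑ j, v j * ∑ k, A.enc v k * μm k j :=
          Finset.sum_congr rfl fun j _ => by rw [hcomp j]
      _ = ∑ j, ∑ k, A.enc v k * (v j * μm k j) := by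
          refine Finset.sum_congr rfl fun j _ => ?_
          rw [Finset.mul_sum]
          exact Finset.sum_congr rfl fun k _ => by ring
      _ = ∑ k, ∑ j, A.enc v k * (v j * μm k j) := Finset.sum_comm
      _ = ∑ k, A.enc v k * ∑ j, v j * μm k j :=
          Finset.sum_congr rfl fun k _ => by rw [Finset.mul_sum]
  have e3 : ∀ k, ∑ j, v j * μm k j ≤ (c / Real.sqrt d) * (s * Real.sqrt (M k)) := by
    intro k
    have heq : ∑ j, v j * μm k j = (c / Real.sqrt d) * ∑ j, chs (σ j) * μm k j := by
      rw [Finset.mul_sum]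
      refine Finset.sum_congr rfl fun j _ => ?_
      rw [hv]; ring
    rw [heq]
    exact mul_le_mul_of_nonneg_left (hσ k) (by positivity)
  set S1 : ℝ := ∑ k, A.enc v k * Real.sqrt (M k) with hS1def
  have hA : c ^ 2 ≤ (c * s / Real.sqrt d) * S1 := by
    calc c ^ 2 = ∑ k, A.enc v k * (∑ j, v j * μm k j) := by rw [e1, e2]
      _ ≤ ∑ k, A.enc v k * ((c / Real.sqrt d) * (s * Real.sqrt (M k))) :=
          Finset.sum_le_sum fun k _ => mul_le_mul_of_nonneg_left (e3 k) (A.enc_nonneg v k)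
      _ = (c * s / Real.sqrt d) * S1 := by
          rw [hS1def, Finset.mul_sum]
          exact Finset.sum_congr rfl fun k _ => by ring
  -- step (B): Cauchy-Schwarz
  have hCS : S1 ^ 2 ≤ ∑ k, A.enc v k * M k := by
    have h := Finset.sum_mul_sq_le_sq_mul_sq Finset.univ (fun k => Real.sqrt (A.enc v k))
      (fun k => Real.sqrt (A.enc v k) * Real.sqrt (M k))
    have h1 : ∀ k ∈ Finset.univ, Real.sqrt (A.enc v k) * (Real.sqrt (A.enc v k) * Real.sqrt (M k))
        = A.enc v k * Real.sqrt (M k) := fun k _ => by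
      rw [← mul_assoc, Real.mul_self_sqrt (A.enc_nonneg v k)]
    have h2 : ∀ k ∈ Finset.univ, Real.sqrt (A.enc v k) ^ 2 = A.enc v k := fun k _ =>
      Real.sq_sqrt (A.enc_nonneg v k)
    have h3 : ∀ k ∈ Finset.univ, (Real.sqrt (A.enc v k) * Real.sqrt (M k)) ^ 2
        = A.enc v k * M k := fun k _ => by
      rw [mul_pow, Real.sq_sqrt (A.enc_nonneg v k), Real.sq_sqrt (hMnn k)]
    rw [Finset.sum_congr rfl h1, Finset.sum_congr rfl h2, Finset.sum_congr rfl h3, hp1,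
      one_mul] at h
    exact h
  -- step (C)
  have hA' : c ^ 2 * Real.sqrt d ≤ c * s * S1 := by
    have h := mul_le_mul_of_nonneg_right hA (Real.sqrt_nonneg d)
    calc c ^ 2 * Real.sqrt d ≤ (c * s / Real.sqrt d) * S1 * Real.sqrt d := h
      _ = c * s * S1 := by field_simp
  have hS1lb : c * Real.sqrt d / s ≤ S1 := by
    rw [div_le_iff₀ hspos]
    have h := le_of_mul_le_mul_left
      (by nlinarith [hA'] : c * (Real.sqrt d * c) ≤ c * (s * S1)) hc
    linarith
  have hS2 : c ^ 2 * d / s ^ 2 ≤ ∑ k, A.enc v k * M k := by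
    have h1 : (c * Real.sqrt d / s) ^ 2 ≤ S1 ^ 2 :=
      pow_le_pow_left₀ (by positivity) hS1lb 2
    have h2 : (c * Real.sqrt d / s) ^ 2 = c ^ 2 * d / s ^ 2 := by
      rw [div_pow, mul_pow, Real.sq_sqrt hdpos.le]
    linarith [hCS]
  -- step (D): MSE lower bound via variance
  have hk : ∀ k, ∑ j, (μm k j - v j) ^ 2 ≤ ∫ u, (∑ j, (u j - v j) ^ 2) ∂(A.dec k) := by
    intro k
    haveI := A.dec_prob k
    have hsqi := A.dec_sq_integrable k
    have hint : ∫ u, (∑ j, (u j - v j) ^ 2) ∂(A.dec k)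
        = ∑ j, ∫ u, (u j - v j) ^ 2 ∂(A.dec k) :=
      integral_finset_sum _ fun j _ => int_coord_sub_sq _ hsqi j (v j)
    rw [hint]
    refine Finset.sum_le_sum fun j _ => ?_
    have hf : Integrable (fun u : Fin d → ℝ => u j - v j) (A.dec k) :=
      (int_coord _ hsqi j).sub (integrable_const _)
    have hf2 : Integrable (fun u : Fin d → ℝ => (u j - v j) ^ 2) (A.dec k) :=
      int_coord_sub_sq _ hsqi j (v j)
    have hvar := var_ineq (A.dec k) hf hf2
    have hmean : ∫ u, (u j - v j) ∂(A.dec k) = μm k j - v j := by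
      rw [integral_sub (int_coord _ hsqi j) (integrable_const _), mean_coord _ hsqi j,
        integral_const]
      simp [hμm]
    rw [hmean] at hvar
    exact hvar
  have hexpand : ∀ k, ∑ j, (μm k j - v j) ^ 2
      = M k - 2 * (∑ j, v j * μm k j) + c ^ 2 := by
    intro k
    have h : ∀ j ∈ Finset.univ, (μm k j - v j) ^ 2
        = ((μm k j) ^ 2 - 2 * (v j * μm k j)) + v j ^ 2 := fun j _ => by ring
    rw [Finset.sum_congr rfl h, Finset.sum_add_distrib, Finset.sum_sub_distrib,
      ← Finset.mul_sum, hvsum, hM]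
  have hswap : ∑ k, A.enc v k * (∑ j, v j * μm k j) = c ^ 2 := by rw [← e2, ← e1]
  have hMSE : (∑ k, A.enc v k * M k) - c ^ 2 ≤ MSE A v := by
    have h1 : ∑ k, A.enc v k * (∑ j, (μm k j - v j) ^ 2) ≤ MSE A v := by
      unfold MSE
      exact Finset.sum_le_sum fun k _ =>
        mul_le_mul_of_nonneg_left (hk k) (A.enc_nonneg v k)
    have h2 : ∑ k, A.enc v k * (∑ j, (μm k j - v j) ^ 2)
        = (∑ k, A.enc v k * M k) - 2 * c ^ 2 + c ^ 2 := by
      calc ∑ k, A.enc v k * (∑ j, (μm k j - v j) ^ 2)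
          = ∑ k, (A.enc v k * M k - 2 * (A.enc v k * (∑ j, v j * μm k j))
              + A.enc v k * c ^ 2) := by
            refine Finset.sum_congr rfl fun k _ => ?_
            rw [hexpand k]; ring
        _ = (∑ k, A.enc v k * M k) - 2 * c ^ 2 + c ^ 2 := by
            rw [Finset.sum_add_distrib, Finset.sum_sub_distrib, ← Finset.mul_sum, hswap,
              ← Finset.sum_mul, hp1, one_mul]
    linarith
  -- conclude
  have hCv := hCbd v hball
  have hchain : c ^ 2 * d / s ^ 2 - c ^ 2 ≤ Cbd := by linarith
  have hb1 : (1:ℝ) ≤ b := by exact_mod_cast hb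
  have h1 : s ^ 2 ≤ 4 * b * Real.log 2 := by rw [hs2]; nlinarith
  have h2 : c ^ 2 * d / (4 * b * Real.log 2) ≤ c ^ 2 * d / s ^ 2 := by
    apply div_le_div_of_nonneg_left (by positivity) (by positivity) h1
  have h3 : 8 * Real.log 2 * (b:ℝ) ≤ d := by
    have h := mul_le_mul_of_nonneg_left hbd
      (le_of_lt (by positivity : (0:ℝ) < 8 * Real.log 2))
    rwa [← mul_assoc, mul_inv_cancel₀ (by positivity), one_mul] at h
  have h4 : c ^ 2 ≤ c ^ 2 * d / (8 * b * Real.log 2) := by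
    rw [le_div_iff₀ (by positivity)]
    exact mul_le_mul_of_nonneg_left (by linarith [h3]) (sq_nonneg c)
  have h5 : c ^ 2 * d / (4 * (b:ℝ) * Real.log 2)
      = 2 * (c ^ 2 * d / (8 * b * Real.log 2)) := by
    field_simp
    ring
  have h6 : (8 * Real.log 2)⁻¹ * c ^ 2 * d / b = c ^ 2 * d / (8 * b * Real.log 2) := by
    field_simp
  rw [h6]
  linarith
end

section
/- Consider the secure-aggregation distributed mean estimation model with n clients, dimension d, radius c > 0, and finite abelian group G. If the scheme satisfies E[‖μ̂(Z₁ + ⋯ + Z_n) − μ‖₂²] ≤ ξ for all inputs x₁, …, x_n ∈ B_d(c), where 0 < ξ ≤ c², then the group size must satisfy log₂|G| ≥ (d/2)·log₂(c²/ξ). -/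
open MeasureTheory Finset

/-- Mean squared error of a secure-aggregation distributed mean estimation scheme:
each client `i` encodes its vector `x i` into a group element via the Markov kernel
`enc i`, independently across clients; the server sees only the sum of the group
elements and applies the (randomized, independent) decoder `dec` to estimate the
mean `(1/n)·Σᵢ xᵢ`. -/
noncomputable def dmeMSE {n d : ℕ} {G : Type*} [AddCommGroup G] [Fintype G]
    (enc : Fin n → (Fin d → ℝ) → G → ℝ) (dec : G → Measure (Fin d → ℝ))
    (x : Fin n → Fin d → ℝ) : ℝ :=
  ∑ z : Fin n → G,
    (∏ i, enc i (x i) (z i)) *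
      ∫ u, (∑ j, (u j - (n : ℝ)⁻¹ * ∑ i, x i j) ^ 2) ∂(dec (∑ i, z i))

lemma myIntegrableOfSq {α : Type*} [MeasurableSpace α] {μ : Measure α} [IsProbabilityMeasure μ]
    {f : α → ℝ} (hm : AEStronglyMeasurable f μ)
    (h2 : Integrable (fun a => f a ^ 2) μ) : Integrable f μ := by
  refine ((integrable_const (1:ℝ)).add h2).mono hm ?_
  filter_upwards with a
  simp only [Real.norm_eq_abs, Pi.add_apply]
  have h1 : |f a| ^ 2 = f a ^ 2 := sq_abs _
  have h3 : (0:ℝ) ≤ 1 + f a ^ 2 := by nlinarith [sq_nonneg (f a)]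
  rw [abs_of_nonneg h3]
  nlinarith [sq_nonneg (|f a| - 1), abs_nonneg (f a)]

lemma mySqIntegralLe {α : Type*} [MeasurableSpace α] {μ : Measure α} [IsProbabilityMeasure μ]
    {f : α → ℝ} (hm : AEStronglyMeasurable f μ)
    (h2 : Integrable (fun a => f a ^ 2) μ) : (∫ a, f a ∂μ) ^ 2 ≤ ∫ a, f a ^ 2 ∂μ := by
  have hf : Integrable f μ := myIntegrableOfSq hm h2
  set c := ∫ a, f a ∂μ with hc
  have hexp : ∫ a, (f a - c) ^ 2 ∂μ = (∫ a, f a ^ 2 ∂μ) - c ^ 2 := by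
    have h : (fun a => (f a - c) ^ 2) = fun a => f a ^ 2 - (2 * c) * f a + c ^ 2 := by
      funext a; ring
    have ig : Integrable (fun a => 2 * c * f a) μ := hf.const_mul _
    have ia : Integrable (fun a => f a ^ 2 - 2 * c * f a) μ := h2.sub ig
    rw [h, integral_add ia (integrable_const _), integral_sub h2 ig,
      MeasureTheory.integral_const_mul, integral_const]
    simp [← hc]
    ring
  have h0 : 0 ≤ ∫ a, (f a - c) ^ 2 ∂μ := integral_nonneg fun a => sq_nonneg _
  linarith [hexp ▸ h0]


/-- in the secure-aggregation DME model with `n` clients, dimension `d`,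
radius `c > 0` and finite abelian group `G`, if the scheme has MSE at most `ξ ≤ c²`
for all inputs in the ball `B_d(c)`, then `log₂|G| ≥ (d/2)·log₂(c²/ξ)`. -/
theorem secagg_dme_group_size_lower_bound (n d : ℕ) (hn : 0 < n) (hd : 0 < d)
    (c ξ : ℝ) (hc : 0 < c) (hξ : 0 < ξ) (hξc : ξ ≤ c ^ 2)
    (G : Type) [AddCommGroup G] [Fintype G]
    (enc : Fin n → (Fin d → ℝ) → G → ℝ)
    (henc_nonneg : ∀ i v g, 0 ≤ enc i v g)
    (henc_sum_one : ∀ i (v : Fin d → ℝ),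
      Real.sqrt (∑ j, (v j) ^ 2) ≤ c → ∑ g, enc i v g = 1)
    (dec : G → Measure (Fin d → ℝ))
    (hdec_prob : ∀ g, IsProbabilityMeasure (dec g))
    (hdec_sq : ∀ g, Integrable (fun u : Fin d → ℝ => ∑ j, (u j) ^ 2) (dec g))
    (hacc : ∀ x : Fin n → Fin d → ℝ,
      (∀ i, Real.sqrt (∑ j, (x i j) ^ 2) ≤ c) → dmeMSE enc dec x ≤ ξ) :
    (d : ℝ) / 2 * Real.logb 2 (c ^ 2 / ξ) ≤ Real.logb 2 (Fintype.card G) := by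
  classical
  haveI : Nonempty (Fin d) := ⟨⟨0, hd⟩⟩
  haveI := hdec_prob
  have hsξ : (0:ℝ) < Real.sqrt ξ := Real.sqrt_pos.mpr hξ
  -- coordinate integrability facts
  have hsqj : ∀ (s : G) (j : Fin d),
      Integrable (fun u : Fin d → ℝ => (u j) ^ 2) (dec s) := by
    intro s j
    refine (hdec_sq s).mono
      (((measurable_pi_apply j).pow_const 2).aestronglyMeasurable) ?_
    filter_upwards with u
    have h1 : (0:ℝ) ≤ ∑ k, (u k) ^ 2 := Finset.sum_nonneg fun k _ => sq_nonneg _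
    rw [Real.norm_eq_abs, Real.norm_eq_abs, abs_of_nonneg (sq_nonneg _), abs_of_nonneg h1]
    exact Finset.single_le_sum (fun k _ => sq_nonneg (u k)) (mem_univ j)
  have hj : ∀ (s : G) (j : Fin d),
      Integrable (fun u : Fin d → ℝ => u j) (dec s) :=
    fun s j => myIntegrableOfSq (measurable_pi_apply j).aestronglyMeasurable (hsqj s j)
  -- means of the decoder distributions
  set m : G → Fin d → ℝ := fun s j => ∫ u, u j ∂(dec s) with hm
  -- Step B: every vector in the ball is within √ξ of some mean
  have key : ∀ v : Fin d → ℝ, (∑ j, (v j) ^ 2) ≤ c ^ 2 →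
      ∃ s : G, ∑ j, (v j - m s j) ^ 2 ≤ ξ := by
    intro v hv
    have hvball : Real.sqrt (∑ j, (v j) ^ 2) ≤ c := by
      calc Real.sqrt (∑ j, (v j) ^ 2) ≤ Real.sqrt (c ^ 2) := Real.sqrt_le_sqrt hv
      _ = c := Real.sqrt_sq hc.le
    have hmse := hacc (fun _ => v) (fun _ => hvball)
    set I : G → ℝ := fun s => ∫ u, (∑ j, (u j - v j) ^ 2) ∂(dec s) with hI
    have hn' : (n:ℝ) ≠ 0 := Nat.cast_ne_zero.mpr hn.ne'
    have hdme : dmeMSE enc dec (fun _ => v)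
        = ∑ z : Fin n → G, (∏ i, enc i v (z i)) * I (∑ i, z i) := by
      simp only [dmeMSE, hI, Finset.sum_const, card_univ, Fintype.card_fin,
        nsmul_eq_mul, inv_mul_cancel_left₀ hn']
    obtain ⟨s0, -, hs0⟩ := Finset.exists_min_image (univ : Finset G) I ⟨0, mem_univ 0⟩
    have hsum1 : ∑ z : Fin n → G, ∏ i, enc i v (z i) = 1 := by
      calc ∑ z : Fin n → G, ∏ i, enc i v (z i)
          = ∑ z ∈ Fintype.piFinset (fun _ : Fin n => (univ : Finset G)),
              ∏ i, enc i v (z i) := by rw [Fintype.piFinset_univ]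
        _ = ∏ i : Fin n, ∑ g : G, enc i v g := (Finset.prod_univ_sum _ _).symm
        _ = 1 := by
            rw [Finset.prod_congr rfl fun i _ => henc_sum_one i v hvball]
            simp
    have hlow : I s0 ≤ dmeMSE enc dec (fun _ => v) := by
      rw [hdme]
      calc I s0 = (∑ z : Fin n → G, ∏ i, enc i v (z i)) * I s0 := by
            rw [hsum1, one_mul]
        _ = ∑ z : Fin n → G, (∏ i, enc i v (z i)) * I s0 := by rw [Finset.sum_mul]
        _ ≤ ∑ z : Fin n → G, (∏ i, enc i v (z i)) * I (∑ i, z i) :=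
            Finset.sum_le_sum fun z _ => mul_le_mul_of_nonneg_left
              (hs0 _ (mem_univ _)) (Finset.prod_nonneg fun i _ => henc_nonneg i v (z i))
    have hIs0 : I s0 ≤ ξ := hlow.trans hmse
    refine ⟨s0, ?_⟩
    have hint : ∀ j, Integrable (fun u : Fin d → ℝ => (u j - v j) ^ 2) (dec s0) := by
      intro j
      have h : (fun u : Fin d → ℝ => (u j - v j) ^ 2)
          = fun u => (u j) ^ 2 - 2 * v j * u j + v j ^ 2 := by funext u; ring
      rw [h]
      exact ((hsqj s0 j).sub ((hj s0 j).const_mul _)).add (integrable_const _)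
    have hsplit : I s0 = ∑ j, ∫ u, (u j - v j) ^ 2 ∂(dec s0) :=
      integral_finset_sum _ fun j _ => hint j
    have heach : ∀ j, (v j - m s0 j) ^ 2 ≤ ∫ u, (u j - v j) ^ 2 ∂(dec s0) := by
      intro j
      have h2 := mySqIntegralLe
        (f := fun u : Fin d → ℝ => u j - v j)
        (((measurable_pi_apply j).sub measurable_const).aestronglyMeasurable)
        (hint j)
      have hmean : ∫ u, (u j - v j) ∂(dec s0) = m s0 j - v j := by
        rw [integral_sub (hj s0 j) (integrable_const _), integral_const]
        simp [hm]
      rw [hmean] at h2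
      calc (v j - m s0 j) ^ 2 = (m s0 j - v j) ^ 2 := by ring
        _ ≤ _ := h2
    calc ∑ j, (v j - m s0 j) ^ 2 ≤ ∑ j, ∫ u, (u j - v j) ^ 2 ∂(dec s0) :=
          Finset.sum_le_sum fun j _ => heach j
      _ = I s0 := hsplit.symm
      _ ≤ ξ := hIs0
  -- Step C: volume argument in Euclidean space
  set e : (Fin d → ℝ) ≃ EuclideanSpace ℝ (Fin d) := (WithLp.equiv 2 (Fin d → ℝ)).symm with he
  have hdist : ∀ (w : EuclideanSpace ℝ (Fin d)) (y : Fin d → ℝ),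
      dist w (e y) = Real.sqrt (∑ j, (w j - y j) ^ 2) := by
    intro w y
    rw [EuclideanSpace.dist_eq]
    congr 1
    refine Finset.sum_congr rfl fun j _ => ?_
    rw [Real.dist_eq, sq_abs, he]
    simp [WithLp.equiv_symm_apply, PiLp.toLp_apply]
  have hcover : Metric.closedBall (0 : EuclideanSpace ℝ (Fin d)) c ⊆
      ⋃ s : G, Metric.closedBall (e (m s)) (Real.sqrt ξ) := by
    intro w hw
    have hw' : ∑ j, (w j) ^ 2 ≤ c ^ 2 := by
      have h0 : dist w (e (fun _ => 0)) ≤ c := by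
        have : e (fun _ : Fin d => (0:ℝ)) = 0 := by
          apply PiLp.ext; intro j; simp [he, WithLp.equiv_symm_apply, PiLp.toLp_apply]
        rw [this]; exact Metric.mem_closedBall.mp hw
      rw [hdist] at h0
      simp only [sub_zero] at h0
      have hsum0 : (0:ℝ) ≤ ∑ j, (w j) ^ 2 := Finset.sum_nonneg fun j _ => sq_nonneg _
      nlinarith [Real.sq_sqrt hsum0, Real.sqrt_nonneg (∑ j, (w j) ^ 2)]
    obtain ⟨s, hs⟩ := key (fun j => w j) hw'
    refine Set.mem_iUnion.mpr ⟨s, ?_⟩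
    rw [Metric.mem_closedBall, hdist]
    exact Real.sqrt_le_sqrt hs
  have hvol := measure_mono hcover (μ := (volume : Measure (EuclideanSpace ℝ (Fin d))))
  have hvol2 : (volume : Measure (EuclideanSpace ℝ (Fin d)))
      (⋃ s : G, Metric.closedBall (e (m s)) (Real.sqrt ξ))
      ≤ ∑ s : G, volume (Metric.closedBall (e (m s)) (Real.sqrt ξ)) := by
    refine (measure_iUnion_le _).trans ?_
    rw [tsum_fintype]
  set K := ENNReal.ofReal
      (Real.sqrt Real.pi ^ (Fintype.card (Fin d)) /
        ((Fintype.card (Fin d) : ℝ) / 2 + 1).Gamma) with hK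
  have hball : ∀ (x : EuclideanSpace ℝ (Fin d)) (r : ℝ),
      volume (Metric.closedBall x r) = (ENNReal.ofReal r) ^ d * K := by
    intro x r
    rw [EuclideanSpace.volume_closedBall (Fin d) x r, hK, Fintype.card_fin]
  have hineq : (ENNReal.ofReal c) ^ d * K
      ≤ (Fintype.card G : ENNReal) * ((ENNReal.ofReal (Real.sqrt ξ)) ^ d * K) := by
    calc (ENNReal.ofReal c) ^ d * K = volume (Metric.closedBall (0 : EuclideanSpace ℝ (Fin d)) c) :=
          (hball 0 c).symm
      _ ≤ ∑ s : G, volume (Metric.closedBall (e (m s)) (Real.sqrt ξ)) := hvol.trans hvol2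
      _ = ∑ s : G, (ENNReal.ofReal (Real.sqrt ξ)) ^ d * K :=
          Finset.sum_congr rfl fun s _ => hball _ _
      _ = (Fintype.card G : ENNReal) * ((ENNReal.ofReal (Real.sqrt ξ)) ^ d * K) := by
          rw [Finset.sum_const, card_univ, nsmul_eq_mul]
  have hK0 : K ≠ 0 := by
    rw [hK]
    refine (ENNReal.ofReal_pos.mpr ?_).ne'
    have h1 : (0:ℝ) < Real.sqrt Real.pi ^ (Fintype.card (Fin d)) :=
      pow_pos (Real.sqrt_pos.mpr Real.pi_pos) _
    have h2 : (0:ℝ) < Real.Gamma (Fintype.card (Fin d) / 2 + 1) :=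
      Real.Gamma_pos_of_pos (by positivity)
    exact div_pos h1 h2
  have hKtop : K ≠ ⊤ := ENNReal.ofReal_ne_top
  have hineq2 : (ENNReal.ofReal c) ^ d
      ≤ (Fintype.card G : ENNReal) * (ENNReal.ofReal (Real.sqrt ξ)) ^ d := by
    rw [← mul_assoc] at hineq
    exact (ENNReal.mul_le_mul_iff_left hK0 hKtop).mp hineq
  have hreal : c ^ d ≤ (Fintype.card G : ℝ) * (Real.sqrt ξ) ^ d := by
    have h1 : (ENNReal.ofReal (c ^ d))
        ≤ ENNReal.ofReal ((Fintype.card G : ℝ) * (Real.sqrt ξ) ^ d) := by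
      rw [ENNReal.ofReal_pow hc.le, ENNReal.ofReal_mul (by positivity),
        ENNReal.ofReal_pow (Real.sqrt_nonneg _), ENNReal.ofReal_natCast]
      exact hineq2
    have h2 : (0:ℝ) ≤ (Fintype.card G : ℝ) * (Real.sqrt ξ) ^ d := by positivity
    exact (ENNReal.ofReal_le_ofReal_iff h2).mp h1
  -- Step D: logarithms
  have hratio : (c / Real.sqrt ξ) ^ d ≤ (Fintype.card G : ℝ) := by
    rw [div_pow, div_le_iff₀ (pow_pos hsξ d)]
    exact hreal
  have hrpos : (0:ℝ) < (c / Real.sqrt ξ) ^ d := pow_pos (div_pos hc hsξ) d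
  have hlog : Real.logb 2 ((c / Real.sqrt ξ) ^ d) ≤ Real.logb 2 (Fintype.card G) :=
    Real.logb_le_logb_of_le one_lt_two hrpos hratio
  have hsq : (c / Real.sqrt ξ) ^ 2 = c ^ 2 / ξ := by
    rw [div_pow, Real.sq_sqrt hξ.le]
  calc (d : ℝ) / 2 * Real.logb 2 (c ^ 2 / ξ)
      = (d : ℝ) / 2 * Real.logb 2 ((c / Real.sqrt ξ) ^ 2) := by rw [hsq]
    _ = (d : ℝ) / 2 * (2 * Real.logb 2 (c / Real.sqrt ξ)) := by rw [Real.logb_pow]; norm_num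
    _ = (d : ℝ) * Real.logb 2 (c / Real.sqrt ξ) := by ring
    _ = Real.logb 2 ((c / Real.sqrt ξ) ^ d) := by rw [Real.logb_pow]
    _ ≤ Real.logb 2 (Fintype.card G) := hlog
end

section
/- Let (C, v̂) be a b-bit randomized compression scheme for the ball B_d(c) with sup over v ∈ B_d(c) of MSE(v) ≤ γ² for some γ > 0. Then the 2^b points y_m = ∫ u dv̂(m)(u), for m ∈ M, form a γ-covering of B_d(c): for every v ∈ B_d(c) there exists m ∈ M with ‖y_m − v‖₂ ≤ γ. -/
open MeasureTheory Finset

/-- if a `b`-bit compression scheme for `B_d(c)` has worst-case MSE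
at most `γ²` over the ball, then the decoder means `y_k = ∫ u d(dec k)(u)` form a
`γ`-covering of `B_d(c)`. -/
theorem compression_gives_covering (d b : ℕ) (c γ : ℝ) (hγ : 0 < γ)
    (A : CompressionScheme d b c)
    (hmse : ∀ v : Fin d → ℝ, Real.sqrt (∑ j, (v j) ^ 2) ≤ c → MSE A v ≤ γ ^ 2) :
    ∀ v : Fin d → ℝ, Real.sqrt (∑ j, (v j) ^ 2) ≤ c →
      ∃ k : Fin (2 ^ b),
        Real.sqrt (∑ j, ((∫ u, u ∂(A.dec k)) j - v j) ^ 2) ≤ γ := by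
  intro v hv
  by_contra hcon
  push_neg at hcon
  have hIk : ∀ k : Fin (2 ^ b), γ ^ 2 < ∫ u, (∑ j, (u j - v j) ^ 2) ∂(A.dec k) := by
    intro k
    have hprob := A.dec_prob k
    set μ := A.dec k with hμdef
    have hsq := A.dec_sq_integrable k
    have hsqj : ∀ j : Fin d, Integrable (fun u : Fin d → ℝ => (u j) ^ 2) μ := by
      intro j
      refine hsq.mono ((measurable_pi_apply j).pow_const 2).aestronglyMeasurable ?_
      filter_upwards with u
      simp only [Real.norm_eq_abs, abs_pow, sq_abs]
      rw [abs_of_nonneg (by positivity)]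
      exact Finset.single_le_sum (fun i _ => sq_nonneg (u i)) (Finset.mem_univ j)
    have hintj : ∀ j : Fin d, Integrable (fun u : Fin d → ℝ => u j) μ := by
      intro j
      refine ((integrable_const (1:ℝ)).add (hsqj j)).mono
        (measurable_pi_apply j).aestronglyMeasurable ?_
      filter_upwards with u
      have : |u j| ≤ 1 + (u j)^2 := by nlinarith [sq_nonneg (|u j| - 1), sq_abs (u j)]
      simpa [Real.norm_eq_abs, abs_of_nonneg (by positivity : (0:ℝ) ≤ 1 + (u j)^2)] using this
    have hid : Integrable (fun u : Fin d → ℝ => u) μ := by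
      refine ((integrable_finset_sum Finset.univ (fun j _ => (hintj j).abs)).mono'
        measurable_id.aestronglyMeasurable ?_)
      filter_upwards with u
      refine (pi_norm_le_iff_of_nonneg (Finset.sum_nonneg fun i _ => abs_nonneg _)).2 fun i => ?_
      exact Finset.single_le_sum (fun i _ => abs_nonneg (u i)) (Finset.mem_univ i)
    have hfj : ∀ j : Fin d, Integrable (fun u : Fin d → ℝ => (u j - v j)^2) μ := by
      intro j
      have heq : (fun u : Fin d → ℝ => (u j - v j)^2)
          = fun u => ((u j)^2 - (2 * v j) * (u j)) + (v j)^2 := by funext u; ring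
      rw [heq]
      exact ((hsqj j).sub ((hintj j).const_mul _)).add (integrable_const _)
    set y := ∫ u, u ∂μ with hy
    have hvar : ∀ j, (y j - v j)^2 ≤ ∫ u, (u j - v j)^2 ∂μ := by
      intro j
      have heval : y j = ∫ u, u j ∂μ := by
        have := (ContinuousLinearMap.proj (R := ℝ) (φ := fun _ : Fin d => ℝ) j).integral_comp_comm hid
        simpa [hy] using this.symm
      set m := y j - v j with hm
      have hfint : Integrable (fun u : Fin d → ℝ => u j - v j) μ :=
        (hintj j).sub (integrable_const _)
      have hmeq : m = ∫ u, (u j - v j) ∂μ := by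
        rw [hm, heval, integral_sub (hintj j) (integrable_const _), integral_const]
        simp
      have h0 : 0 ≤ ∫ u, (u j - v j - m)^2 ∂μ := integral_nonneg fun u => sq_nonneg _
      have hexp : (fun u : Fin d → ℝ => (u j - v j - m)^2)
          = fun u => ((u j - v j)^2 - (2*m) * (u j - v j)) + m^2 := by funext u; ring
      rw [hexp] at h0
      have hsplit : ∫ u, (((u j - v j)^2 - (2*m) * (u j - v j)) + m^2) ∂μ
          = ((∫ u, (u j - v j)^2 ∂μ) - (2*m) * m) + m^2 := by
        have h2 : Integrable (fun u : Fin d → ℝ => (2*m) * (u j - v j)) μ :=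
          hfint.const_mul (2*m)
        have h1 : Integrable (fun u : Fin d → ℝ => (u j - v j)^2 - (2*m) * (u j - v j)) μ :=
          (hfj j).sub h2
        rw [integral_add h1 (integrable_const (m^2)), integral_sub (hfj j) h2,
          integral_const_mul, ← hmeq, integral_const]
        simp
      rw [hsplit] at h0
      nlinarith [h0]
    have hsum : ∑ j, (y j - v j)^2 ≤ ∫ u, (∑ j, (u j - v j)^2) ∂μ := by
      rw [integral_finset_sum _ (fun j _ => hfj j)]
      exact Finset.sum_le_sum fun j _ => hvar j
    have hγlt : γ^2 < ∑ j, (y j - v j)^2 := by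
      have h1 := hcon k
      have hnn : 0 ≤ ∑ j, (y j - v j)^2 := Finset.sum_nonneg fun j _ => sq_nonneg _
      nlinarith [Real.sq_sqrt hnn, Real.sqrt_nonneg (∑ j, (y j - v j)^2)]
    linarith
  have hsum1 := A.enc_sum_one v hv
  obtain ⟨k0, hk0⟩ : ∃ k, 0 < A.enc v k := by
    by_contra h
    push_neg at h
    have : ∑ k, A.enc v k = 0 :=
      Finset.sum_eq_zero fun k _ => le_antisymm (h k) (A.enc_nonneg v k)
    rw [this] at hsum1
    norm_num at hsum1
  have hlt : γ^2 < MSE A v := by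
    have hrw : γ^2 = ∑ k, A.enc v k * γ^2 := by rw [← Finset.sum_mul, hsum1, one_mul]
    rw [hrw, MSE]
    exact Finset.sum_lt_sum (fun k _ => mul_le_mul_of_nonneg_left (hIk k).le (A.enc_nonneg v k))
      ⟨k0, Finset.mem_univ k0, mul_lt_mul_of_pos_left (hIk k0) hk0⟩
  exact absurd (hmse v hv) (not_le.2 hlt)
end

section
/- There exists a universal constant C > 0 with the following property (expected maximum load of balls in bins). Let d and w be positive integers with d ≥ w·log(w+1), let X₁, …, X_d be independent random variables each uniformly distributed on {1,…,w}, and for each k ∈ {1,…,w} let N_k = #{ i : X_i = k }. Then E[ max over k of N_k ] ≤ C·d/w. -/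
open Finset

set_option maxHeartbeats 1000000

lemma count_fixed (d w t : ℕ) (S : Finset (Fin d)) (hS : S.card = t) (k : Fin w) :
    (univ.filter fun f : Fin d → Fin w => ∀ i ∈ S, f i = k).card ≤ w ^ (d - t) := by
  classical
  have h := Finset.card_le_card_of_injOn
    (f := fun (g : Fin d → Fin w) => fun i : {i // i ∈ Sᶜ} => g i.1)
    (s := univ.filter fun f : Fin d → Fin w => ∀ i ∈ S, f i = k)
    (t := (univ : Finset ({i // i ∈ Sᶜ} → Fin w)))
    (fun a _ => mem_univ _) ?_
  · calc (univ.filter fun f : Fin d → Fin w => ∀ i ∈ S, f i = k).card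
        ≤ (univ : Finset ({i // i ∈ Sᶜ} → Fin w)).card := h
      _ = w ^ (d - t) := by
        rw [Finset.card_univ, Fintype.card_fun]
        congr 1
        · simp
        · rw [Fintype.card_coe, Finset.card_compl, hS, Fintype.card_fin]
  · intro g₁ hg₁ g₂ hg₂ hgg
    simp only [coe_filter, Set.mem_setOf_eq, mem_univ, true_and] at hg₁ hg₂
    funext i
    by_cases hi : i ∈ S
    · rw [hg₁ i hi, hg₂ i hi]
    · exact congrFun hgg ⟨i, by simpa using hi⟩

lemma count_bin (d w t : ℕ) (k : Fin w) :
    (univ.filter fun f : Fin d → Fin w =>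
        t ≤ (univ.filter fun i => f i = k).card).card
      ≤ d.choose t * w ^ (d - t) := by
  classical
  have hsub : (univ.filter fun f : Fin d → Fin w =>
        t ≤ (univ.filter fun i => f i = k).card)
      ⊆ (Finset.powersetCard t (univ : Finset (Fin d))).biUnion
          (fun S => univ.filter fun f => ∀ i ∈ S, f i = k) := by
    intro f hf
    simp only [mem_filter, mem_univ, true_and] at hf
    obtain ⟨S, hSsub, hScard⟩ := Finset.exists_subset_card_eq hf
    refine Finset.mem_biUnion.2 ⟨S, ?_, ?_⟩
    · exact Finset.mem_powersetCard.2 ⟨Finset.subset_univ _, hScard⟩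
    · simp only [mem_filter, mem_univ, true_and]
      intro i hi
      simpa using hSsub hi
  have h1 := (Finset.card_le_card hsub).trans Finset.card_biUnion_le
  have h2 : ∑ S ∈ Finset.powersetCard t (univ : Finset (Fin d)),
        (univ.filter fun f : Fin d → Fin w => ∀ i ∈ S, f i = k).card
      ≤ ∑ S ∈ Finset.powersetCard t (univ : Finset (Fin d)), w ^ (d - t) :=
    Finset.sum_le_sum fun S hS => count_fixed d w t S (Finset.mem_powersetCard.1 hS).2 k
  have h3 : ∑ S ∈ Finset.powersetCard t (univ : Finset (Fin d)), w ^ (d - t)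
      = d.choose t * w ^ (d - t) := by
    rw [Finset.sum_const, smul_eq_mul, Finset.card_powersetCard, card_univ,
      Fintype.card_fin]
  exact h1.trans (h3 ▸ h2)

/-- expected maximum load of balls in bins: there is a universal
constant `C > 0` such that if `d ≥ w·log(w+1)` and `X₁, …, X_d` are independent
uniform on `{1,…,w}` with bin counts `N_k = #{i : X_i = k}`, then
`E[max_k N_k] ≤ C·d/w`.  The expectation is written explicitly as the average over
the (finite, uniform) sample space `Fin d → Fin w`. -/
theorem expected_max_load :
    ∃ C : ℝ, 0 < C ∧
      ∀ (d w : ℕ), 0 < d → 0 < w →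
      (w : ℝ) * Real.log ((w : ℝ) + 1) ≤ (d : ℝ) →
      ((∑ f : Fin d → Fin w,
          ((Finset.univ.sup fun k : Fin w =>
            (Finset.univ.filter fun i : Fin d => f i = k).card : ℕ) : ℝ))
        / (Fintype.card (Fin d → Fin w) : ℝ))
      ≤ C * d / w := by
  classical
  refine ⟨11, by norm_num, fun d w hd hw hdw => ?_⟩
  set N : (Fin d → Fin w) → Fin w → ℕ :=
    fun f k => (Finset.univ.filter fun i : Fin d => f i = k).card with hN
  set M : (Fin d → Fin w) → ℕ := fun f => Finset.univ.sup (N f) with hM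
  have hWpos : (0:ℝ) < w := by exact_mod_cast hw
  have hDpos : (0:ℝ) < d := by exact_mod_cast hd
  set t : ℕ := ⌈(8 * d / w : ℝ)⌉₊ with htdef
  have hxpos : (0:ℝ) < 8 * d / w := by positivity
  have htpos : 0 < t := Nat.ceil_pos.2 hxpos
  have htge : 8 * (d:ℝ) / w ≤ t := Nat.le_ceil _
  have htle : (t:ℝ) ≤ 8 * d / w + 1 := (Nat.ceil_lt_add_one hxpos.le).le
  -- M f ≤ d always
  have hMd : ∀ f : Fin d → Fin w, M f ≤ d := by
    intro f
    refine Finset.sup_le fun k _ => ?_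
    calc N f k ≤ (univ : Finset (Fin d)).card := Finset.card_filter_le _ _
      _ = d := by simp
  -- union bound on the tail set
  have htail : (univ.filter fun f : Fin d → Fin w => t ≤ M f).card
      ≤ w * (d.choose t * w ^ (d - t)) := by
    have hsub : (univ.filter fun f : Fin d → Fin w => t ≤ M f)
        ⊆ (univ : Finset (Fin w)).biUnion
            (fun k => univ.filter fun f : Fin d → Fin w => t ≤ N f k) := by
      intro f hf
      simp only [mem_filter, mem_univ, true_and] at hf
      obtain ⟨k, _, hk⟩ := (Finset.le_sup_iff (by exact htpos)).1 hf
      exact Finset.mem_biUnion.2 ⟨k, mem_univ _, by simp [hk]⟩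
    calc (univ.filter fun f : Fin d → Fin w => t ≤ M f).card
        ≤ ∑ k : Fin w, (univ.filter fun f : Fin d → Fin w => t ≤ N f k).card :=
          le_trans (Finset.card_le_card hsub) Finset.card_biUnion_le
      _ ≤ ∑ _k : Fin w, d.choose t * w ^ (d - t) :=
          Finset.sum_le_sum fun k _ => count_bin d w t k
      _ = w * (d.choose t * w ^ (d - t)) := by simp [mul_comm]
  -- split the sum
  have hstep : ∑ f : Fin d → Fin w, M f
      ≤ t * w ^ d + d * (w * (d.choose t * w ^ (d - t))) := by
    rw [← Finset.sum_filter_add_sum_filter_not univ (fun f => t ≤ M f)]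
    have h1 : ∑ f ∈ univ.filter (fun f : Fin d → Fin w => t ≤ M f), M f
        ≤ d * (w * (d.choose t * w ^ (d - t))) := by
      calc ∑ f ∈ univ.filter (fun f : Fin d → Fin w => t ≤ M f), M f
          ≤ ∑ _f ∈ univ.filter (fun f : Fin d → Fin w => t ≤ M f), d :=
            Finset.sum_le_sum fun f _ => hMd f
        _ = (univ.filter (fun f : Fin d → Fin w => t ≤ M f)).card * d := by
            rw [Finset.sum_const, smul_eq_mul]
        _ ≤ (w * (d.choose t * w ^ (d - t))) * d := by
            exact Nat.mul_le_mul_right _ htail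
        _ = d * (w * (d.choose t * w ^ (d - t))) := by ring
    have h2 : ∑ f ∈ univ.filter (fun f : Fin d → Fin w => ¬ t ≤ M f), M f
        ≤ t * w ^ d := by
      calc ∑ f ∈ univ.filter (fun f : Fin d → Fin w => ¬ t ≤ M f), M f
          ≤ ∑ _f ∈ univ.filter (fun f : Fin d → Fin w => ¬ t ≤ M f), t := by
            refine Finset.sum_le_sum fun f hf => ?_
            simp only [mem_filter, not_le] at hf
            exact hf.2.le
        _ = (univ.filter (fun f : Fin d → Fin w => ¬ t ≤ M f)).card * t := by
            rw [Finset.sum_const, smul_eq_mul]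
        _ ≤ (univ : Finset (Fin d → Fin w)).card * t :=
            Nat.mul_le_mul_right _ (Finset.card_le_card (Finset.filter_subset _ _))
        _ = t * w ^ d := by
            rw [card_univ, Fintype.card_fun]
            simp [mul_comm]
    omega
  -- key real estimate: choose * w^(d-t) ≤ w^d / (w+1)^8
  have hlog : Real.log ((w:ℝ) + 1) ≤ (d:ℝ) / w := by
    rw [le_div_iff₀ hWpos]
    linarith [hdw]
  have hW1 : (0:ℝ) < (w:ℝ) + 1 := by linarith
  have hkey : ((d.choose t : ℕ) : ℝ) * (w:ℝ) ^ (d - t) ≤ (w:ℝ) ^ d / ((w:ℝ) + 1) ^ 8 := by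
    rcases le_or_gt t d with htd | htd
    · -- t ≤ d : need choose ≤ w^t / (w+1)^8
      have hts : ((d.choose t : ℕ) : ℝ) ≤ (w:ℝ) ^ t / ((w:ℝ) + 1) ^ 8 := by
        have hc1 : ((d.choose t : ℕ) : ℝ) ≤ (d:ℝ) ^ t / (t.factorial : ℝ) := by
          have := Nat.choose_le_pow_div (α := ℝ) t d
          push_cast at this ⊢
          exact this
        have hfac : ((t:ℝ)) ^ t ≤ Real.exp t * (t.factorial : ℝ) := by
          have h := Real.pow_div_factorial_le_exp (x := (t:ℝ)) (Nat.cast_nonneg t) t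
          have hfpos : (0:ℝ) < (t.factorial : ℝ) := by
            exact_mod_cast t.factorial_pos
          rw [div_le_iff₀ hfpos] at h
          exact h
        have hTpos : (0:ℝ) < t := by exact_mod_cast htpos
        have hfpos : (0:ℝ) < (t.factorial : ℝ) := by exact_mod_cast t.factorial_pos
        have hc2 : ((d.choose t : ℕ) : ℝ) ≤ (Real.exp 1 * d / (t * w)) ^ t * (w:ℝ) ^ t := by
          have hinv : (1:ℝ) / (t.factorial : ℝ) ≤ Real.exp t / (t:ℝ) ^ t := by
            rw [div_le_div_iff₀ hfpos (by positivity)]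
            linarith [hfac]
          calc ((d.choose t : ℕ) : ℝ) ≤ (d:ℝ) ^ t / (t.factorial : ℝ) := hc1
            _ = (d:ℝ) ^ t * (1 / (t.factorial : ℝ)) := by ring
            _ ≤ (d:ℝ) ^ t * (Real.exp t / (t:ℝ) ^ t) := by
                exact mul_le_mul_of_nonneg_left hinv (by positivity)
            _ = (Real.exp 1 * d / (t * w)) ^ t * (w:ℝ) ^ t := by
                have hexp1 : Real.exp (t:ℝ) = Real.exp 1 ^ t := by
                  rw [← Real.exp_nat_mul]; norm_num
                have h1 : ((t:ℝ)) ^ t ≠ 0 := by positivity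
                have h2 : ((w:ℝ)) ^ t ≠ 0 := by positivity
                rw [hexp1, div_pow, mul_pow, mul_pow]
                field_simp
        have hbase : Real.exp 1 * d / ((t:ℝ) * w) ≤ Real.exp (-1) := by
          have h8 : 8 * (d:ℝ) ≤ (t:ℝ) * w := by
            rw [div_le_iff₀ hWpos] at htge
            linarith
          have he2 : Real.exp 1 * Real.exp 1 ≤ 8 := by
            nlinarith [Real.exp_one_lt_d9, Real.exp_pos 1]
          rw [Real.exp_neg, div_le_iff₀ (by positivity : (0:ℝ) < (t:ℝ) * w),
            inv_mul_eq_div, le_div_iff₀ (Real.exp_pos 1)]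
          nlinarith [hDpos, Real.exp_pos 1]
        have hexp : (Real.exp 1 * d / ((t:ℝ) * w)) ^ t ≤ ((w:ℝ) + 1)⁻¹ ^ 8 := by
          calc (Real.exp 1 * d / ((t:ℝ) * w)) ^ t ≤ (Real.exp (-1)) ^ t :=
              pow_le_pow_left₀ (by positivity) hbase t
            _ = Real.exp (-(t:ℝ)) := by
                rw [← Real.exp_nat_mul, mul_neg_one]
            _ ≤ Real.exp (-(8 * Real.log ((w:ℝ) + 1))) := by
                apply Real.exp_le_exp.2
                have : 8 * Real.log ((w:ℝ)+1) ≤ 8 * ((d:ℝ)/w) := by linarith [hlog]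
                have h2 : 8 * ((d:ℝ)/w) ≤ t := by
                  calc 8 * ((d:ℝ)/w) = 8 * d / w := by ring
                    _ ≤ t := htge
                linarith
            _ = ((w:ℝ) + 1)⁻¹ ^ 8 := by
                have h8e : Real.exp (8 * Real.log ((w:ℝ) + 1)) = ((w:ℝ) + 1) ^ (8:ℕ) := by
                  rw [show (8:ℝ) = ((8:ℕ):ℝ) by norm_num, Real.exp_nat_mul,
                    Real.exp_log hW1]
                rw [Real.exp_neg, h8e, inv_pow]
        calc ((d.choose t : ℕ) : ℝ) ≤ (Real.exp 1 * d / ((t:ℝ) * w)) ^ t * (w:ℝ) ^ t := hc2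
          _ ≤ ((w:ℝ) + 1)⁻¹ ^ 8 * (w:ℝ) ^ t := by
              exact mul_le_mul_of_nonneg_right hexp (by positivity)
          _ = (w:ℝ) ^ t / ((w:ℝ) + 1) ^ 8 := by
              rw [inv_pow]; ring
      have hpow : (w:ℝ) ^ (d - t) * (w:ℝ) ^ t = (w:ℝ) ^ d := by
        rw [← pow_add]; congr 1; omega
      calc ((d.choose t : ℕ) : ℝ) * (w:ℝ) ^ (d - t)
          ≤ ((w:ℝ) ^ t / ((w:ℝ) + 1) ^ 8) * (w:ℝ) ^ (d - t) :=
            mul_le_mul_of_nonneg_right hts (by positivity)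
        _ = (w:ℝ) ^ d / ((w:ℝ) + 1) ^ 8 := by
            rw [div_mul_eq_mul_div, mul_comm ((w:ℝ)^t), hpow]
    · have : d.choose t = 0 := Nat.choose_eq_zero_of_lt htd
      rw [this]
      simp
      positivity
  -- assemble
  have hcard : (Fintype.card (Fin d → Fin w) : ℝ) = (w:ℝ) ^ d := by
    rw [Fintype.card_fun]; push_cast; simp
  have hpowpos : (0:ℝ) < (w:ℝ) ^ d := by positivity
  rw [hcard, div_le_iff₀ hpowpos]
  have hcast : (∑ f : Fin d → Fin w,
      ((Finset.univ.sup fun k : Fin w =>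
        (Finset.univ.filter fun i : Fin d => f i = k).card : ℕ) : ℝ))
      ≤ (t:ℝ) * (w:ℝ) ^ d + (d:ℝ) * ((w:ℝ) * (((d.choose t : ℕ):ℝ) * (w:ℝ) ^ (d - t))) := by
    have := hstep
    have h2 : ((∑ f : Fin d → Fin w, M f : ℕ) : ℝ)
        ≤ ((t * w ^ d + d * (w * (d.choose t * w ^ (d - t))) : ℕ) : ℝ) := by
      exact_mod_cast this
    push_cast at h2
    convert h2 using 2
  have hsecond : (d:ℝ) * ((w:ℝ) * (((d.choose t : ℕ):ℝ) * (w:ℝ) ^ (d - t)))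
      ≤ ((d:ℝ) / w) * (w:ℝ) ^ d := by
    calc (d:ℝ) * ((w:ℝ) * (((d.choose t : ℕ):ℝ) * (w:ℝ) ^ (d - t)))
        ≤ (d:ℝ) * ((w:ℝ) * ((w:ℝ) ^ d / ((w:ℝ) + 1) ^ 8)) := by
          apply mul_le_mul_of_nonneg_left _ hDpos.le
          exact mul_le_mul_of_nonneg_left hkey hWpos.le
      _ ≤ ((d:ℝ) / w) * (w:ℝ) ^ d := by
          have hpos8 : (0:ℝ) < ((w:ℝ) + 1) ^ 8 := by positivity
          have hW8 : (w:ℝ) * (w:ℝ) ≤ ((w:ℝ) + 1) ^ 8 := by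
            calc (w:ℝ) * (w:ℝ) = (w:ℝ) ^ 2 := by ring
              _ ≤ ((w:ℝ) + 1) ^ 2 := pow_le_pow_left₀ hWpos.le (by linarith) 2
              _ ≤ ((w:ℝ) + 1) ^ 8 :=
                  pow_le_pow_right₀ (by linarith : (1:ℝ) ≤ (w:ℝ) + 1) (by norm_num)
          have hx : ((w:ℝ) * w) / (((w:ℝ) + 1) ^ 8) ≤ 1 := by
            rw [div_le_one hpos8]; exact hW8
          rw [div_mul_eq_mul_div, le_div_iff₀ hWpos]
          calc (d:ℝ) * ((w:ℝ) * ((w:ℝ) ^ d / ((w:ℝ) + 1) ^ 8)) * (w:ℝ)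
              = (d:ℝ) * (w:ℝ) ^ d * (((w:ℝ) * w) / (((w:ℝ) + 1) ^ 8)) := by ring
            _ ≤ (d:ℝ) * (w:ℝ) ^ d * 1 :=
                mul_le_mul_of_nonneg_left hx (by positivity)
            _ = (d:ℝ) * (w:ℝ) ^ d := by ring
  have hone : (1:ℝ) ≤ 2 * (d:ℝ) / w := by
    have hl2 : (0.6931471803:ℝ) < Real.log 2 := Real.log_two_gt_d9
    have hlw : Real.log 2 ≤ Real.log ((w:ℝ) + 1) := by
      apply Real.log_le_log (by norm_num)
      have : (1:ℝ) ≤ (w:ℝ) := by exact_mod_cast hw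
      linarith
    rw [le_div_iff₀ hWpos]
    nlinarith [hlog, hWpos]
  calc (∑ f : Fin d → Fin w,
      ((Finset.univ.sup fun k : Fin w =>
        (Finset.univ.filter fun i : Fin d => f i = k).card : ℕ) : ℝ))
      ≤ (t:ℝ) * (w:ℝ) ^ d + (d:ℝ) * ((w:ℝ) * (((d.choose t : ℕ):ℝ) * (w:ℝ) ^ (d - t))) := hcast
    _ ≤ (8 * (d:ℝ) / w + 1) * (w:ℝ) ^ d + ((d:ℝ)/w) * (w:ℝ) ^ d := by
        have := mul_le_mul_of_nonneg_right htle hpowpos.le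
        linarith [hsecond]
    _ ≤ (11 * (d:ℝ) / w) * (w:ℝ) ^ d := by
        have h1 : 8 * (d:ℝ) / w + 1 + (d:ℝ)/w ≤ 11 * (d:ℝ)/w := by
          have : (1:ℝ) ≤ 2 * (d:ℝ) / w := hone
          have hx : 2*(d:ℝ)/w + 8*(d:ℝ)/w + (d:ℝ)/w = 11*(d:ℝ)/w := by ring
          linarith
        nlinarith [hpowpos]
    _ = 11 * (d:ℝ) / w * (w:ℝ) ^ d := by ring
end

section
/- (Lasso oracle inequality, exact sparsity case.) Let S ∈ ℝ^{m×d}, let μ* ∈ ℝ^d have support T ⊆ {1,…,d} with |T| = s ≥ 1, and suppose S satisfies the restricted eigenvalue condition over T with parameter κ > 0: (1/m)·‖S Δ‖₂² ≥ κ·‖Δ‖₂² for every Δ ∈ ℝ^d with ‖Δ_{Tᶜ}‖₁ ≤ 3·‖Δ_T‖₁. Let y = S μ* + w for some w ∈ ℝ^m, and let λ > 0 satisfy λ ≥ (2/m)·‖Sᵀ w‖_∞. Then any minimizer μ̂ of the Lasso objective x ↦ (1/(2m))·‖y − S x‖₂² + λ·‖x‖₁ over ℝ^d satisfies ‖μ̂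 − μ*‖₂ ≤ (3/κ)·√s·λ. -/
open Finset

set_option maxHeartbeats 1600000 in
/-- Lasso oracle inequality, exact sparsity case: if `μ*` is
supported on `T` with `|T| = s ≥ 1`, `S` satisfies the restricted eigenvalue
condition over `T` with parameter `κ > 0`, `y = S μ* + w`, and
`λ ≥ (2/m)·‖Sᵀ w‖_∞`, then any minimizer `μ̂` of the Lasso objective satisfies
`‖μ̂ − μ*‖₂ ≤ (3/κ)·√s·λ`. -/
theorem lasso_oracle_inequality (m d s : ℕ) (hm : 0 < m) (hs : 1 ≤ s)
    (S : Matrix (Fin m) (Fin d) ℝ)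
    (μstar : Fin d → ℝ) (T : Finset (Fin d)) (hT : T.card = s)
    (hsupp : ∀ j, j ∉ T → μstar j = 0)
    (κ : ℝ) (hκ : 0 < κ)
    -- restricted eigenvalue condition over `T` with parameter `κ`
    (hRE : ∀ Δ : Fin d → ℝ,
      (∑ j ∈ Tᶜ, |Δ j|) ≤ 3 * ∑ j ∈ T, |Δ j| →
      κ * ∑ j, (Δ j) ^ 2 ≤ (1 / (m : ℝ)) * ∑ i, (S.mulVec Δ i) ^ 2)
    (w : Fin m → ℝ) (y : Fin m → ℝ) (hy : y = S.mulVec μstar + w)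
    (lam : ℝ) (hlam_pos : 0 < lam)
    -- `λ ≥ (2/m)·‖Sᵀ w‖_∞`
    (hlam : ∀ j : Fin d, (2 / (m : ℝ)) * |∑ i, S i j * w i| ≤ lam)
    (μhat : Fin d → ℝ)
    -- `μ̂` minimizes the Lasso objective
    (hmin : ∀ x : Fin d → ℝ,
      (1 / (2 * (m : ℝ))) * (∑ i, (y i - S.mulVec μhat i) ^ 2)
          + lam * ∑ j, |μhat j|
        ≤ (1 / (2 * (m : ℝ))) * (∑ i, (y i - S.mulVec x i) ^ 2)
          + lam * ∑ j, |x j|) :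
    Real.sqrt (∑ j, (μhat j - μstar j) ^ 2) ≤ (3 / κ) * Real.sqrt s * lam := by
  classical
  have hm' : (0:ℝ) < m := by exact_mod_cast hm
  set Δ : Fin d → ℝ := fun j => μhat j - μstar j with hΔdef
  set f : Fin m → ℝ := fun i => S.mulVec Δ i with hfdef
  have hresid : ∀ i, y i - S.mulVec μhat i = w i - f i := by
    intro i
    have : S.mulVec μhat i = S.mulVec μstar i + f i := by
      have : μhat = μstar + Δ := by funext j; simp [hΔdef]
      rw [this, Matrix.mulVec_add]; simp [hfdef]
    simp only [hy, this, Pi.add_apply]; ring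
  have hresid2 : ∀ i, y i - S.mulVec μstar i = w i := by
    intro i; simp [hy]
  set W := ∑ i, (w i) ^ 2 with hW
  set A := ∑ i, w i * f i with hA
  set B := ∑ i, (f i) ^ 2 with hB
  have hexp : ∑ i, (y i - S.mulVec μhat i) ^ 2 = W - 2 * A + B := by
    simp only [hresid, hW, hA, hB, sub_sq]
    rw [Finset.sum_add_distrib, Finset.sum_sub_distrib, Finset.mul_sum]
    ring_nf
  have hexp2 : ∑ i, (y i - S.mulVec μstar i) ^ 2 = W := by
    simp [hresid2, hW]
  have hbasic := hmin μstar
  rw [hexp, hexp2] at hbasic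
  set Phat := ∑ j, |μhat j| with hPhat
  set Pstar := ∑ j, |μstar j| with hPstar
  -- A = ∑_j Δ j * c_j with c_j = ∑_i S i j * w i
  have hAswap : A = ∑ j, Δ j * (∑ i, S i j * w i) := by
    simp only [hA, hfdef, Matrix.mulVec, dotProduct, Finset.mul_sum, Finset.sum_mul]
    rw [Finset.sum_comm]
    congr 1; funext j; congr 1; funext i; ring
  have hcbound : ∀ j : Fin d, |∑ i, S i j * w i| ≤ m * lam / 2 := by
    intro j
    have := hlam j
    rw [div_mul_eq_mul_div, div_le_iff₀ hm'] at this
    linarith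
  have hAabs : A ≤ (m * lam / 2) * ∑ j, |Δ j| := by
    rw [hAswap, Finset.mul_sum]
    apply Finset.sum_le_sum
    intro j _
    calc Δ j * (∑ i, S i j * w i) ≤ |Δ j * (∑ i, S i j * w i)| := le_abs_self _
      _ = |Δ j| * |∑ i, S i j * w i| := abs_mul _ _
      _ ≤ |Δ j| * (m * lam / 2) := by
          exact mul_le_mul_of_nonneg_left (hcbound j) (abs_nonneg _)
      _ = (m * lam / 2) * |Δ j| := by ring
  set aT := ∑ j ∈ T, |Δ j| with haT
  set aC := ∑ j ∈ Tᶜ, |Δ j| with haC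
  have hsplit : ∑ j, |Δ j| = aT + aC := (Finset.sum_add_sum_compl T _).symm
  have haTnn : 0 ≤ aT := Finset.sum_nonneg fun _ _ => abs_nonneg _
  have haCnn : 0 ≤ aC := Finset.sum_nonneg fun _ _ => abs_nonneg _
  -- Pstar - Phat ≤ aT - aC
  have hP : Pstar - Phat ≤ aT - aC := by
    have h1 : Pstar = ∑ j ∈ T, |μstar j| := by
      rw [hPstar, ← Finset.sum_add_sum_compl T]
      have : ∑ j ∈ Tᶜ, |μstar j| = 0 := by
        apply Finset.sum_eq_zero; intro j hj
        simp [hsupp j (Finset.mem_compl.mp hj)]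
      simp [this]
    have h2 : Phat = ∑ j ∈ T, |μhat j| + ∑ j ∈ Tᶜ, |μhat j| :=
      (Finset.sum_add_sum_compl T _).symm
    have h3 : ∑ j ∈ Tᶜ, |μhat j| = aC := by
      rw [haC]; apply Finset.sum_congr rfl
      intro j hj
      simp [hΔdef, hsupp j (Finset.mem_compl.mp hj)]
    have h4 : ∑ j ∈ T, |μstar j| - ∑ j ∈ T, |μhat j| ≤ aT := by
      rw [haT, ← Finset.sum_sub_distrib]
      apply Finset.sum_le_sum
      intro j _
      have := abs_sub_abs_le_abs_sub (μstar j) (μhat j)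
      have h5 : |μstar j - μhat j| = |Δ j| := by rw [hΔdef]; exact abs_sub_comm _ _
      linarith
    rw [h1, h2, h3]; linarith
  have hBnn : 0 ≤ B := Finset.sum_nonneg fun _ _ => sq_nonneg _
  -- key inequality
  have hkey : (1 / (2 * (m:ℝ))) * B + (lam/2) * aC ≤ (3*lam/2) * aT := by
    have hAA : (1/(m:ℝ)) * A ≤ (lam/2) * (aT + aC) := by
      rw [← hsplit]
      have : (1/(m:ℝ)) * A ≤ (1/(m:ℝ)) * ((m * lam / 2) * ∑ j, |Δ j|) := by
        apply mul_le_mul_of_nonneg_left hAabs; positivity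
      calc (1/(m:ℝ)) * A ≤ (1/(m:ℝ)) * ((m * lam / 2) * ∑ j, |Δ j|) := this
        _ = (lam/2) * ∑ j, |Δ j| := by field_simp
    have hc : (1 / (2 * (m:ℝ))) * (W - 2*A + B) - (1 / (2 * (m:ℝ))) * W
        = (1 / (2 * (m:ℝ))) * B - (1/(m:ℝ)) * A := by
      field_simp; ring
    nlinarith [hbasic, hAA, hP, hlam_pos]
  have hcone : aC ≤ 3 * aT := by
    have h0 : 0 ≤ (1 / (2 * (m:ℝ))) * B := by positivity
    nlinarith [hkey, hlam_pos]
  have hre := hRE Δ hcone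
  have h2m : (1/(m:ℝ)) * B = 2 * ((1 / (2 * (m:ℝ))) * B) := by field_simp
  have hmain : κ * ∑ j, (Δ j)^2 ≤ 3 * lam * aT := by
    calc κ * ∑ j, (Δ j)^2 ≤ (1/(m:ℝ)) * B := hre
      _ = 2 * ((1 / (2 * (m:ℝ))) * B) := h2m
      _ ≤ 2 * ((3*lam/2) * aT - (lam/2) * aC) := by linarith
      _ ≤ 3 * lam * aT := by linarith [mul_nonneg hlam_pos.le haCnn]
  -- Cauchy-Schwarz: aT ≤ √s * N
  set Q := ∑ j, (Δ j)^2 with hQ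
  have hQnn : 0 ≤ Q := Finset.sum_nonneg fun _ _ => sq_nonneg _
  set N := Real.sqrt Q with hN
  have hNsq : N^2 = Q := Real.sq_sqrt hQnn
  have hCS : aT ≤ Real.sqrt s * N := by
    have h1 : aT ^ 2 ≤ (s:ℝ) * Q := by
      have := sq_sum_le_card_mul_sum_sq (s := T) (f := fun j => |Δ j|)
      have h2 : ∑ j ∈ T, |Δ j| ^ 2 ≤ Q := by
        rw [hQ]
        calc ∑ j ∈ T, |Δ j|^2 = ∑ j ∈ T, (Δ j)^2 := by
              apply Finset.sum_congr rfl; intro j _; rw [sq_abs]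
          _ ≤ ∑ j, (Δ j)^2 :=
              Finset.sum_le_sum_of_subset_of_nonneg (Finset.subset_univ T)
                (fun j _ _ => sq_nonneg _)
      calc aT^2 ≤ (T.card : ℝ) * ∑ j ∈ T, |Δ j|^2 := by exact_mod_cast this
        _ ≤ (s:ℝ) * Q := by
            rw [hT]
            exact mul_le_mul_of_nonneg_left h2 (by positivity)
    have h3 : Real.sqrt (aT^2) ≤ Real.sqrt ((s:ℝ) * Q) := Real.sqrt_le_sqrt h1
    rw [Real.sqrt_sq haTnn, Real.sqrt_mul (by positivity)] at h3
    exact h3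
  -- conclude
  have hfin : κ * N^2 ≤ 3 * lam * (Real.sqrt s * N) := by
    rw [hNsq]
    calc κ * Q ≤ 3 * lam * aT := hmain
      _ ≤ 3 * lam * (Real.sqrt s * N) := by
          exact mul_le_mul_of_nonneg_left hCS (by positivity)
  have hNnn : 0 ≤ N := Real.sqrt_nonneg _
  show N ≤ (3/κ) * Real.sqrt s * lam
  rcases eq_or_lt_of_le hNnn with h0 | h0
  · rw [← h0]; positivity
  · rw [div_mul_eq_mul_div, div_mul_eq_mul_div, le_div_iff₀ hκ]
    nlinarith [hfin, h0]
end
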